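/- arXiv:1308.2334 — 4 statements merged into one kernel-verified Lean document; each statement's English description precedes it below -/
import Mathlib

section
/- For integers or ±∞ values a ≤ b, define the interval representation k_{ab} of the zigzag quiver A∞∞ by k_{ab}(i) = k if a ≤ i ≤ b and 0 otherwise, with k_{ab}(α) = id when both source and target lie in [a,b], and 0 otherwise. Then each k_{ab} is an indecomposable representation. -/
/-!  Representations of the zigzag quiver `A∞∞`: vertices are the integers, each odd
vertex `i` is a source with arrows `i → i-1` and `i → i+1`, each even vertex is a sink. -/

/-- A representation of the zigzag-oriented quiver `A∞∞` over `k`. -/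
structure ZigzagRep (k : Type) [Field k] where
  V : ℤ → Type
  [acg : ∀ i, AddCommGroup (V i)]
  [mod : ∀ i, Module k (V i)]
  /-- the structure map `V i → V (i-1)` out of an odd vertex `i` -/
  f : ∀ (i : ℤ), Odd i → (V i →ₗ[k] V (i - 1))
  /-- the structure map `V i → V (i+1)` out of an odd vertex `i` -/
  g : ∀ (i : ℤ), Odd i → (V i →ₗ[k] V (i + 1))

attribute [instance] ZigzagRep.acg ZigzagRep.mod

variable {k : Type} [Field k]

/-- A morphism of representations of the zigzag quiver. -/
structure ZigzagHom (X Y : ZigzagRep k) where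
  h : ∀ i, X.V i →ₗ[k] Y.V i
  commf : ∀ (i : ℤ) (hi : Odd i), (h (i - 1)).comp (X.f i hi) = (Y.f i hi).comp (h i)
  commg : ∀ (i : ℤ) (hi : Odd i), (h (i + 1)).comp (X.g i hi) = (Y.g i hi).comp (h i)

/-- A representation is indecomposable iff it is nonzero and admits no nontrivial direct sum
decomposition; equivalently (idempotents split in this abelian category) iff it is nonzero and
its only idempotent endomorphisms are `0` and `id`. -/
def ZigzagRep.Indecomposable (X : ZigzagRep k) : Prop :=
  (∃ (i : ℤ) (v : X.V i), v ≠ 0) ∧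
    ∀ e : ZigzagHom X X, (∀ i, (e.h i).comp (e.h i) = e.h i) →
      (∀ i, e.h i = 0) ∨ (∀ i, e.h i = LinearMap.id)

/-- A representation is thin if each vertex space has dimension at most `1`, i.e. is spanned
by a single vector. -/
def ZigzagRep.Thin (X : ZigzagRep k) : Prop :=
  ∀ i : ℤ, ∃ v : X.V i, ∀ w : X.V i, ∃ c : k, w = c • v

/-- `i` lies in the interval `[a, b]`, where `a ∈ ℤ ∪ {-∞}` and `b ∈ ℤ ∪ {+∞}`. -/
def inIcc (a : WithBot ℤ) (b : WithTop ℤ) (i : ℤ) : Prop :=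
  a ≤ (i : WithBot ℤ) ∧ (i : WithTop ℤ) ≤ b

/-- `a ≤ b` inside `ℤ ∪ {±∞}`. -/
def intervalLE (a : WithBot ℤ) (b : WithTop ℤ) : Prop :=
  WithBot.map (fun n : ℤ => (n : WithTop ℤ)) a ≤ (b : WithBot (WithTop ℤ))

/-- The canonical map between the "interval" vertex spaces: the identity whenever both
source and target lie in the interval, and `0` otherwise. -/
noncomputable def offMap (k : Type) [Field k] (P Q : Prop) :
    (PLift P → k) →ₗ[k] (PLift Q → k) := by
  classical
  exact
    { toFun := fun v _ => if hp : P then v ⟨hp⟩ else 0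
      map_add' := by intro x y; funext hq; by_cases hp : P <;> simp [hp]
      map_smul' := by intro c x; funext hq; by_cases hp : P <;> simp [hp] }

/-- The interval representation `k_{ab}` of the zigzag quiver: `k` at the vertices of
`[a,b]`, zero elsewhere, with identity structure maps inside the interval and zero maps
otherwise. -/
noncomputable def intervalRep (k : Type) [Field k] (a : WithBot ℤ) (b : WithTop ℤ) :
    ZigzagRep k where
  V i := PLift (inIcc a b i) → k
  acg i := inferInstance
  mod i := inferInstance
  f i _ := offMap k (inIcc a b i) (inIcc a b (i - 1))
  g i _ := offMap k (inIcc a b i) (inIcc a b (i + 1))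

private lemma pi_one_expand {k : Type} [Field k] {P : Prop} (hp : P) (w : PLift P → k) :
    w = w ⟨hp⟩ • (fun _ => (1 : k)) := by
  funext q
  rw [Subsingleton.elim q ⟨hp⟩]
  simp

private lemma exists_mem_inIcc (a : WithBot ℤ) (b : WithTop ℤ) (hab : intervalLE a b) :
    ∃ i : ℤ, inIcc a b i := by
  induction a using WithBot.recBotCoe with
  | bot =>
    induction b using WithTop.recTopCoe with
    | top => exact ⟨0, bot_le, le_top⟩
    | coe n => exact ⟨n, bot_le, le_refl _⟩
  | coe m =>
    refine ⟨m, le_refl _, ?_⟩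
    induction b using WithTop.recTopCoe with
    | top => exact le_top
    | coe n =>
      simp only [intervalLE, WithBot.map_coe, WithBot.coe_le_coe, WithTop.coe_le_coe] at hab
      exact_mod_cast hab

private lemma inIcc_of_between {a : WithBot ℤ} {b : WithTop ℤ} {i j m : ℤ}
    (hi : inIcc a b i) (hj : inIcc a b j) (h1 : i ≤ m) (h2 : m ≤ j) : inIcc a b m := by
  refine ⟨le_trans hi.1 ?_, le_trans ?_ hj.2⟩
  · exact_mod_cast h1
  · exact_mod_cast h2

/-- For `a ≤ b` in `ℤ ∪ {±∞}`, the interval representation `k_{ab}` of the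
zigzag quiver `A∞∞` is indecomposable. -/
theorem intervalRep_indecomposable (k : Type) [Field k]
    (a : WithBot ℤ) (b : WithTop ℤ) (hab : intervalLE a b) :
    (intervalRep k a b).Indecomposable := by
  classical
  obtain ⟨i0, hi0⟩ := exists_mem_inIcc a b hab
  constructor
  · refine ⟨i0, (fun _ => (1 : k) : PLift (inIcc a b i0) → k), ?_⟩
    intro h
    have h1 : (1 : k) = 0 := congrFun h ⟨hi0⟩
    exact one_ne_zero h1
  · intro e he
    set c : ℤ → k := fun i =>
      if hi : inIcc a b i then e.h i (fun _ => 1) ⟨hi⟩ else 0 with hcdef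
    have E : ∀ (i : ℤ) (hi : inIcc a b i),
        e.h i (fun _ => (1 : k)) ⟨hi⟩ = c i := by
      intro i hi
      simp only [hcdef]
      rw [dif_pos hi]
    have hδ : ∀ (i : ℤ) (hi : inIcc a b i),
        e.h i (fun _ => (1 : k)) = (c i) • (fun _ => (1 : k)) := by
      intro i hi
      rw [pi_one_expand hi (e.h i (fun _ => (1 : k))), E i hi]
    have heval : ∀ (i : ℤ) (hi : inIcc a b i) (w : PLift (inIcc a b i) → k),
        e.h i w = (c i * w ⟨hi⟩) • (fun _ => (1 : k)) := by
      intro i hi w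
      conv_lhs => rw [pi_one_expand hi w]; erw [map_smul]; rw [hδ i hi]
      erw [smul_smul]; rw [mul_comm]; rfl
    have hidem : ∀ (i : ℤ) (hi : inIcc a b i), c i * c i = c i := by
      intro i hi
      have h2 := congrFun (LinearMap.congr_fun (he i) (fun _ => (1 : k))) ⟨hi⟩
      have hL : ((e.h i).comp (e.h i)) (fun _ => (1 : k)) ⟨hi⟩ = c i * c i := by
        show e.h i (e.h i (fun _ => (1 : k))) ⟨hi⟩ = c i * c i
        rw [hδ i hi]; erw [map_smul]
        show c i * (e.h i (fun _ => (1 : k)) ⟨hi⟩) = c i * c i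
        rw [E i hi]
      exact hL.symm.trans (h2.trans (E i hi))
    have hstep : ∀ j : ℤ, inIcc a b j → inIcc a b (j + 1) → c j = c (j + 1) := by
      intro j hj hj1
      rcases Int.even_or_odd j with hev | hod
      · -- `j + 1` is odd, use `commf` at `j + 1`
        have hodd : Odd (j + 1) := Even.add_one hev
        have hj' : inIcc a b (j + 1 - 1) := by rw [show j + 1 - 1 = j by ring]; exact hj
        have hc' : c (j + 1 - 1) = c j := by rw [show j + 1 - 1 = j by ring]
        have h2 := congrFun
          (LinearMap.congr_fun (e.commf (j + 1) hodd) (fun _ => (1 : k))) ⟨hj'⟩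
        have hL : ((e.h (j + 1 - 1)).comp ((intervalRep k a b).f (j + 1) hodd))
            (fun _ => (1 : k)) ⟨hj'⟩ = c (j + 1 - 1) := by
          show e.h (j + 1 - 1)
            (((intervalRep k a b).f (j + 1) hodd) (fun _ => (1 : k))) ⟨hj'⟩ = _
          have hf : ((intervalRep k a b).f (j + 1) hodd) (fun _ => (1 : k))
              = (fun _ => (1 : k)) := funext fun q => dif_pos hj1
          rw [hf]
          exact E (j + 1 - 1) hj'
        have hR : (((intervalRep k a b).f (j + 1) hodd).comp (e.h (j + 1)))
            (fun _ => (1 : k)) ⟨hj'⟩ = c (j + 1) := by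
          show ((intervalRep k a b).f (j + 1) hodd)
            (e.h (j + 1) (fun _ => (1 : k))) ⟨hj'⟩ = _
          have hf : ((intervalRep k a b).f (j + 1) hodd)
              (e.h (j + 1) (fun _ => (1 : k))) ⟨hj'⟩
              = e.h (j + 1) (fun _ => (1 : k)) ⟨hj1⟩ := dif_pos hj1
          rw [hf]
          exact E (j + 1) hj1
        rw [← hc']
        exact hL.symm.trans (h2.trans hR)
      · -- `j` is odd, use `commg` at `j`
        have h2 := congrFun
          (LinearMap.congr_fun (e.commg j hod) (fun _ => (1 : k))) ⟨hj1⟩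
        have hL : ((e.h (j + 1)).comp ((intervalRep k a b).g j hod))
            (fun _ => (1 : k)) ⟨hj1⟩ = c (j + 1) := by
          show e.h (j + 1)
            (((intervalRep k a b).g j hod) (fun _ => (1 : k))) ⟨hj1⟩ = _
          have hg : ((intervalRep k a b).g j hod) (fun _ => (1 : k))
              = (fun _ => (1 : k)) := funext fun q => dif_pos hj
          rw [hg]
          exact E (j + 1) hj1
        have hR : (((intervalRep k a b).g j hod).comp (e.h j))
            (fun _ => (1 : k)) ⟨hj1⟩ = c j := by
          show ((intervalRep k a b).g j hod)
            (e.h j (fun _ => (1 : k))) ⟨hj1⟩ = _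
          have hg : ((intervalRep k a b).g j hod)
              (e.h j (fun _ => (1 : k))) ⟨hj1⟩
              = e.h j (fun _ => (1 : k)) ⟨hj⟩ := dif_pos hj
          rw [hg]
          exact E j hj
        exact hR.symm.trans (h2.symm.trans hL)
    have key : ∀ (i j : ℤ), i ≤ j → inIcc a b i → inIcc a b j → c i = c j := by
      intro i j hij hi
      refine Int.le_induction (motive := fun j _ => inIcc a b j → c i = c j) ?_ ?_ j hij
      · intro _; rfl
      · intro j hij IH hj1
        have hjm : inIcc a b j := inIcc_of_between hi hj1 hij (by omega)
        exact (IH hjm).trans (hstep j hjm hj1)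
    have hconn : ∀ i : ℤ, inIcc a b i → c i = c i0 := by
      intro i hi
      rcases le_total i i0 with h | h
      · exact key i i0 h hi hi0
      · exact (key i0 i h hi0 hi).symm
    have hcases : c i0 = 0 ∨ c i0 = 1 := by
      have h0 : c i0 * (c i0 - 1) = 0 := by
        rw [mul_sub, mul_one, hidem i0 hi0, sub_self]
      rcases mul_eq_zero.mp h0 with h | h
      · exact Or.inl h
      · exact Or.inr (sub_eq_zero.mp h)
    rcases hcases with hc0 | hc1
    · left
      intro i
      by_cases hi : inIcc a b i
      · apply LinearMap.ext; intro w
        rw [heval i hi w, hconn i hi, hc0]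
        simp
        rfl
      · exact LinearMap.ext fun w => funext fun q => absurd q.down hi
    · right
      intro i
      by_cases hi : inIcc a b i
      · apply LinearMap.ext; intro w
        rw [heval i hi w, hconn i hi, hc1, one_mul, LinearMap.id_apply,
          ← pi_one_expand hi w]
      · exact LinearMap.ext fun w => funext fun q => absurd q.down hi
end

section
/- Let V be a representation of the zigzag quiver A∞∞ over a field k. If every nonzero structure map of V is bijective and V is indecomposable, then V is isomorphic to an interval representation k_{ab} for some a ≤ b in ℤ ∪ {±∞}. -/
variable {k : Type} [Field k]

namespace ZZaux

variable {k : Type} [Field k] (V : ZigzagRep k)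

/-- cast between vertex spaces along an equality of indices -/
def cst {i j : ℤ} (h : i = j) : V.V i →ₗ[k] V.V j := by subst h; exact LinearMap.id

@[simp] lemma cst_self {i : ℤ} (h : i = i) (x : V.V i) : cst V h x = x := rfl

@[simp] lemma cst_cst {i j m : ℤ} (h : i = j) (h' : j = m) (x : V.V i) :
    cst V h' (cst V h x) = cst V (h.trans h') x := by subst h; subst h'; rfl

lemma cst_eq_zero {i j : ℤ} (h : i = j) (x : V.V i) : cst V h x = 0 ↔ x = 0 := by
  subst h; exact Iff.rfl

lemma cst_bijective {i j : ℤ} (h : i = j) : Function.Bijective (cst V h) := by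
  subst h; exact Function.bijective_id

lemma odd_succ_of_not_odd {j : ℤ} (h : ¬ Odd j) : Odd (j + 1) := by
  rcases Int.even_or_odd j with he | ho
  · exact he.add_one
  · exact absurd ho h

variable {A B : Type} [AddCommGroup A] [Module k A] [AddCommGroup B] [Module k B]

open Classical in
noncomputable def inv' (m : A →ₗ[k] B) : B →ₗ[k] A :=
  if hb : Function.Bijective m then ((LinearEquiv.ofBijective m hb).symm : B →ₗ[k] A) else 0

lemma inv'_left {m : A →ₗ[k] B} (hb : Function.Bijective m) (x : A) : inv' m (m x) = x := by
  rw [inv']; rw [dif_pos hb]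
  exact (LinearEquiv.ofBijective m hb).symm_apply_apply x

lemma inv'_right {m : A →ₗ[k] B} (hb : Function.Bijective m) (y : B) : m (inv' m y) = y := by
  rw [inv']; rw [dif_pos hb]
  exact (LinearEquiv.ofBijective m hb).apply_symm_apply y

lemma inv'_zero {m : A →ₗ[k] B} (hb : ¬ Function.Bijective m) : inv' m = 0 := by
  rw [inv']; rw [dif_neg hb]

/-- the canonical map along the edge `j → j+1` (or inverse thereof), 0 if not invertible -/
noncomputable def up (j : ℤ) : V.V j →ₗ[k] V.V (j + 1) :=
  if hj : Odd j then V.g j hj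
  else inv' ((cst V (show j + 1 - 1 = j by omega)) ∘ₗ V.f (j + 1) (odd_succ_of_not_odd hj))

/-- the canonical map along the edge `j+1 → j` (or inverse thereof), 0 if not invertible -/
noncomputable def dn (j : ℤ) : V.V (j + 1) →ₗ[k] V.V j :=
  if hj : Odd j then inv' (V.g j hj)
  else (cst V (show j + 1 - 1 = j by omega)) ∘ₗ V.f (j + 1) (odd_succ_of_not_odd hj)

lemma updn (hf : ∀ (i : ℤ) (hi : Odd i), V.f i hi = 0 ∨ Function.Bijective (V.f i hi))
    (hg : ∀ (i : ℤ) (hi : Odd i), V.g i hi = 0 ∨ Function.Bijective (V.g i hi)) (j : ℤ) :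
    ((∀ x, dn V j (up V j x) = x) ∧ (∀ y, up V j (dn V j y) = y)) ∨
      (up V j = 0 ∧ dn V j = 0) := by
  rw [up, dn]
  split_ifs with hj
  · by_cases hb : Function.Bijective (V.g j hj)
    · exact Or.inl ⟨fun x => inv'_left hb x, fun y => inv'_right hb y⟩
    · refine Or.inr ⟨(hg j hj).resolve_right hb, ?_⟩
      rw [inv'_zero hb]
  · set m := (cst V (show j + 1 - 1 = j by omega)) ∘ₗ V.f (j + 1) (odd_succ_of_not_odd hj) with hm
    by_cases hb : Function.Bijective m
    · exact Or.inl ⟨fun x => inv'_right hb x, fun y => inv'_left hb y⟩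
    · refine Or.inr ⟨inv'_zero hb, ?_⟩
      rcases hf (j + 1) (odd_succ_of_not_odd hj) with h0 | hbf
      · rw [hm, h0]; ext y; simp
      · exact absurd ((cst_bijective V (show j + 1 - 1 = j by omega)).comp hbf) hb

lemma g_eq_up {i : ℤ} (hi : Odd i) : V.g i hi = up V i := (dif_pos hi).symm

lemma f_cast {i j : ℤ} (h : i = j) (hi : Odd i) (hj : Odd j) (x : V.V i) :
    V.f j hj (cst V h x) = cst V (by rw [h]) (V.f i hi x) := by subst h; rfl

lemma f_eq_dn {i : ℤ} (hi : Odd i) (x : V.V i) :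
    V.f i hi x = dn V (i - 1) (cst V (show i = (i - 1) + 1 by omega) x) := by
  have hni : ¬ Odd (i - 1) := by
    intro ho
    rcases hi with ⟨m, hm⟩; rcases ho with ⟨n, hn⟩; omega
  rw [dn, dif_neg hni, LinearMap.comp_apply,
    f_cast V (show i = (i - 1) + 1 by omega) hi (odd_succ_of_not_odd hni) x, cst_cst, cst_self]

lemma up_cast {i j : ℤ} (h : i = j) (x : V.V i) :
    up V j (cst V h x) = cst V (by rw [h]) (up V i x) := by subst h; rfl

lemma dn_cast {i j : ℤ} (h : i = j) (y : V.V (i + 1)) :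
    dn V j (cst V (by rw [h] : i + 1 = j + 1) y) = cst V h (dn V i y) := by subst h; rfl

end ZZaux

namespace ZZaux

variable {k : Type} [Field k] (V : ZigzagRep k) (i0 : ℤ) (v0 : V.V i0) (l0 : V.V i0 →ₗ[k] k)

/-- upward transport of the vector `v0` -/
noncomputable def uu : (n : ℕ) → V.V (i0 + n)
  | 0 => cst V (by simp) v0
  | n + 1 => cst V (by push_cast; ring) (up V (i0 + n) (uu n))

/-- downward transport of the vector `v0` -/
noncomputable def dd : (n : ℕ) → V.V (i0 - n)
  | 0 => cst V (by simp) v0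
  | n + 1 => cst V (show i0 - ((n : ℤ) + 1) = i0 - ((n + 1 : ℕ) : ℤ) by push_cast; ring)
      (dn V (i0 - ((n : ℤ) + 1))
        (cst V (show i0 - (n : ℤ) = (i0 - ((n : ℤ) + 1)) + 1 by ring) (dd n)))

/-- the transported vector at each vertex -/
noncomputable def u (j : ℤ) : V.V j :=
  if h : i0 ≤ j then cst V (show i0 + ((j - i0).toNat : ℤ) = j by omega) (uu V i0 v0 (j - i0).toNat)
  else cst V (show i0 - ((i0 - j).toNat : ℤ) = j by omega) (dd V i0 v0 (i0 - j).toNat)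

/-- upward transport of the functional `l0` -/
noncomputable def ll : (n : ℕ) → (V.V (i0 + n) →ₗ[k] k)
  | 0 => l0 ∘ₗ cst V (by simp)
  | n + 1 => ll n ∘ₗ dn V (i0 + n) ∘ₗ
      cst V (show i0 + ((n + 1 : ℕ) : ℤ) = (i0 + n) + 1 by push_cast; ring)

/-- downward transport of the functional `l0` -/
noncomputable def dl : (n : ℕ) → (V.V (i0 - n) →ₗ[k] k)
  | 0 => l0 ∘ₗ cst V (by simp)
  | n + 1 => dl n ∘ₗ cst V (show (i0 - ((n : ℤ) + 1)) + 1 = i0 - n by ring) ∘ₗ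
      up V (i0 - ((n : ℤ) + 1)) ∘ₗ
      cst V (show i0 - ((n + 1 : ℕ) : ℤ) = i0 - ((n : ℤ) + 1) by push_cast; ring)

/-- the transported functional at each vertex -/
noncomputable def l (j : ℤ) : V.V j →ₗ[k] k :=
  if h : i0 ≤ j then ll V i0 l0 (j - i0).toNat ∘ₗ cst V (show j = i0 + ((j - i0).toNat : ℤ) by omega)
  else dl V i0 l0 (i0 - j).toNat ∘ₗ cst V (show j = i0 - ((i0 - j).toNat : ℤ) by omega)

lemma u_eq_uu {j : ℤ} (n : ℕ) (h : i0 + n = j) : u V i0 v0 j = cst V h (uu V i0 v0 n) := by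
  have h1 : i0 ≤ j := by omega
  rw [u, dif_pos h1]
  have h2 : (j - i0).toNat = n := by omega
  subst h2
  rfl

@[simp] lemma u_i0 : u V i0 v0 i0 = v0 := by
  rw [u_eq_uu V i0 v0 0 (by simp)]
  show cst V _ (cst V _ v0) = v0
  rw [cst_cst, cst_self]

lemma u_eq_dd {j : ℤ} (n : ℕ) (h : i0 - n = j) : u V i0 v0 j = cst V h (dd V i0 v0 n) := by
  by_cases h1 : i0 ≤ j
  · have h2 : n = 0 := by omega
    subst h2
    have h3 : j = i0 := by omega
    subst h3
    rw [u_i0]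
    show v0 = cst V _ (cst V _ v0)
    rw [cst_cst, cst_self]
  · rw [u, dif_neg h1]
    have h2 : (i0 - j).toNat = n := by omega
    subst h2
    rfl

lemma l_eq_ll {j : ℤ} (n : ℕ) (h : i0 + n = j) (x : V.V j) :
    l V i0 l0 j x = ll V i0 l0 n (cst V h.symm x) := by
  have h1 : i0 ≤ j := by omega
  rw [l, dif_pos h1]
  have h2 : (j - i0).toNat = n := by omega
  subst h2
  rfl

@[simp] lemma l_i0 (x : V.V i0) : l V i0 l0 i0 x = l0 x := by
  rw [l_eq_ll V i0 l0 0 (by simp)]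
  show l0 (cst V _ (cst V _ x)) = l0 x
  rw [cst_cst, cst_self]

lemma l_eq_dl {j : ℤ} (n : ℕ) (h : i0 - n = j) (x : V.V j) :
    l V i0 l0 j x = dl V i0 l0 n (cst V h.symm x) := by
  by_cases h1 : i0 ≤ j
  · have h2 : n = 0 := by omega
    subst h2
    have h3 : j = i0 := by omega
    subst h3
    rw [l_i0]
    show l0 x = l0 (cst V _ (cst V _ x))
    rw [cst_cst, cst_self]
  · rw [l, dif_neg h1]
    have h2 : (i0 - j).toNat = n := by omega
    subst h2
    rfl

lemma u_cast {i j : ℤ} (h : i = j) : u V i0 v0 j = cst V h (u V i0 v0 i) := by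
  subst h; rw [cst_self]

lemma l_cast {i j : ℤ} (h : i = j) (x : V.V i) :
    l V i0 l0 j (cst V h x) = l V i0 l0 i x := by
  subst h; rw [cst_self]

lemma uR {j : ℤ} (h : i0 ≤ j) : u V i0 v0 (j + 1) = up V j (u V i0 v0 j) := by
  rw [u_eq_uu V i0 v0 ((j - i0).toNat + 1) (by omega), u_eq_uu V i0 v0 (j - i0).toNat (by omega)]
  show cst V _ (cst V _ (up V _ (uu V i0 v0 _))) = _
  rw [cst_cst, up_cast V (show i0 + ((j - i0).toNat : ℤ) = j by omega)]

lemma uL {j : ℤ} (h : j + 1 ≤ i0) : u V i0 v0 j = dn V j (u V i0 v0 (j + 1)) := by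
  obtain ⟨n, hn⟩ : ∃ n : ℕ, i0 - ((n : ℤ) + 1) = j := ⟨(i0 - j - 1).toNat, by omega⟩
  subst hn
  rw [u_eq_dd V i0 v0 (n + 1) (by push_cast; ring), u_eq_dd V i0 v0 n (by push_cast; ring)]
  show cst V _ (cst V _ (dn V _ (cst V _ (dd V i0 v0 n)))) = _
  rw [cst_cst, cst_self]

lemma lR {j : ℤ} (h : i0 ≤ j) (x : V.V (j + 1)) :
    l V i0 l0 (j + 1) x = l V i0 l0 j (dn V j x) := by
  rw [l_eq_ll V i0 l0 ((j - i0).toNat + 1) (by omega), l_eq_ll V i0 l0 (j - i0).toNat (by omega)]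
  show ll V i0 l0 _ (dn V _ (cst V _ (cst V _ x))) = _
  rw [cst_cst]
  rw [show (dn V (i0 + ((j - i0).toNat : ℤ))) (cst V (by omega) x)
      = cst V (show j = i0 + ((j - i0).toNat : ℤ) by omega) (dn V j x) from
    dn_cast V (show j = i0 + ((j - i0).toNat : ℤ) by omega) x]

lemma lL {j : ℤ} (h : j + 1 ≤ i0) (x : V.V j) :
    l V i0 l0 j x = l V i0 l0 (j + 1) (up V j x) := by
  obtain ⟨n, hn⟩ : ∃ n : ℕ, i0 - ((n : ℤ) + 1) = j := ⟨(i0 - j - 1).toNat, by omega⟩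
  subst hn
  rw [l_eq_dl V i0 l0 (n + 1) (by push_cast; ring), l_eq_dl V i0 l0 n (by push_cast; ring)]
  simp only [dl, LinearMap.comp_apply, cst_cst, cst_self]

end ZZaux

namespace ZZaux

variable {k : Type} [Field k] (V : ZigzagRep k) (i0 : ℤ) (v0 : V.V i0) (l0 : V.V i0 →ₗ[k] k)

/-- the transported rank-one idempotent -/
noncomputable def q (j : ℤ) : V.V j →ₗ[k] V.V j :=
  (l V i0 l0 j).smulRight (u V i0 v0 j)

lemma q_apply (j : ℤ) (x : V.V j) :
    q V i0 v0 l0 j x = l V i0 l0 j x • u V i0 v0 j := rfl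

lemma q_cast {i j : ℤ} (h : i = j) (x : V.V i) :
    q V i0 v0 l0 j (cst V h x) = cst V h (q V i0 v0 l0 i x) := by
  subst h; rw [cst_self, cst_self]

lemma q_comm_up (hf : ∀ (i : ℤ) (hi : Odd i), V.f i hi = 0 ∨ Function.Bijective (V.f i hi))
    (hg : ∀ (i : ℤ) (hi : Odd i), V.g i hi = 0 ∨ Function.Bijective (V.g i hi)) (j : ℤ) (x : V.V j) :
    q V i0 v0 l0 (j + 1) (up V j x) = up V j (q V i0 v0 l0 j x) := by
  rcases updn V hf hg j with ⟨h1, h2⟩ | ⟨h1, h2⟩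
  · rcases le_or_gt i0 j with hij | hij
    · rw [q_apply, q_apply, lR V i0 l0 hij, h1, uR V i0 v0 hij, map_smul]
    · have hij' : j + 1 ≤ i0 := hij
      rw [q_apply, q_apply, uL V i0 v0 hij', lL V i0 l0 hij', map_smul, h2]
  · rw [h1]
    simp [q_apply]

lemma q_comm_dn (hf : ∀ (i : ℤ) (hi : Odd i), V.f i hi = 0 ∨ Function.Bijective (V.f i hi))
    (hg : ∀ (i : ℤ) (hi : Odd i), V.g i hi = 0 ∨ Function.Bijective (V.g i hi)) (j : ℤ) (y : V.V (j + 1)) :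
    q V i0 v0 l0 j (dn V j y) = dn V j (q V i0 v0 l0 (j + 1) y) := by
  rcases updn V hf hg j with ⟨h1, h2⟩ | ⟨h1, h2⟩
  · rcases le_or_gt i0 j with hij | hij
    · rw [q_apply, q_apply, map_smul, uR V i0 v0 hij, h1, lR V i0 l0 hij]
    · have hij' : j + 1 ≤ i0 := hij
      rw [q_apply, q_apply, map_smul, lL V i0 l0 hij', h2, uL V i0 v0 hij']
  · rw [h2]
    simp [q_apply]

lemma q_idem_aux (hf : ∀ (i : ℤ) (hi : Odd i), V.f i hi = 0 ∨ Function.Bijective (V.f i hi))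
    (hg : ∀ (i : ℤ) (hi : Odd i), V.g i hi = 0 ∨ Function.Bijective (V.g i hi)) (hl0 : l0 v0 = 1) (j : ℤ) :
    l V i0 l0 j (u V i0 v0 j) • u V i0 v0 j = u V i0 v0 j := by
  rcases le_or_gt i0 j with hij | hij
  · refine Int.le_induction (motive := fun j _ => l V i0 l0 j (u V i0 v0 j) • u V i0 v0 j = u V i0 v0 j) ?_ ?_ j hij
    · simp [hl0]
    · intro n hn ih

      rw [uR V i0 v0 hn, lR V i0 l0 hn]
      rcases updn V hf hg n with ⟨h1, _⟩ | ⟨h1, _⟩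
      · rw [h1, ← map_smul, ih]
      · rw [h1]
        simp
  · have hij' : j ≤ i0 := le_of_lt hij
    refine Int.le_induction_down (motive := fun j _ => l V i0 l0 j (u V i0 v0 j) • u V i0 v0 j = u V i0 v0 j) ?_ ?_ j hij'
    · simp [hl0]
    · intro n hn ih

      rw [uL V i0 v0 (show (n - 1) + 1 ≤ i0 by omega),
        lL V i0 l0 (show (n - 1) + 1 ≤ i0 by omega),
        u_cast V i0 v0 (show n = (n - 1) + 1 by omega)]
      rcases updn V hf hg (n - 1) with ⟨_, h2⟩ | ⟨_, h2⟩
      · rw [h2, l_cast, ← map_smul, ← map_smul, ih]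
      · rw [h2]
        simp

lemma q_idem (hf : ∀ (i : ℤ) (hi : Odd i), V.f i hi = 0 ∨ Function.Bijective (V.f i hi))
    (hg : ∀ (i : ℤ) (hi : Odd i), V.g i hi = 0 ∨ Function.Bijective (V.g i hi)) (hl0 : l0 v0 = 1) (j : ℤ) (x : V.V j) :
    q V i0 v0 l0 j (q V i0 v0 l0 j x) = q V i0 v0 l0 j x := by
  rw [q_apply, q_apply, map_smul, smul_eq_mul, mul_smul, q_idem_aux V i0 v0 l0 hf hg hl0]

lemma u_zero_up {i : ℤ} (hi : i0 ≤ i) (h0 : u V i0 v0 i = 0) :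
    ∀ j, i ≤ j → u V i0 v0 j = 0 := by
  refine Int.le_induction h0 ?_
  intro n hn ih
  rw [uR V i0 v0 (le_trans hi hn), ih, map_zero]

lemma u_zero_dn {i : ℤ} (hi : i ≤ i0) (h0 : u V i0 v0 i = 0) :
    ∀ j, j ≤ i → u V i0 v0 j = 0 := by
  refine Int.le_induction_down h0 ?_
  intro n hn ih
  rw [uL V i0 v0 (show (n - 1) + 1 ≤ i0 by omega),
    u_cast V i0 v0 (show n = (n - 1) + 1 by omega), ih, map_zero, map_zero]

end ZZaux

/-- Let `V` be a representation of the zigzag quiver `A∞∞` over a field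
`k`.  If every nonzero structure map of `V` is bijective and `V` is indecomposable, then
`V` is isomorphic to an interval representation `k_{ab}` for some `a ≤ b` in `ℤ ∪ {±∞}`. -/
theorem indecomposable_with_bijective_maps_is_interval (k : Type) [Field k]
    (V : ZigzagRep k)
    (hf : ∀ (i : ℤ) (hi : Odd i), V.f i hi = 0 ∨ Function.Bijective (V.f i hi))
    (hg : ∀ (i : ℤ) (hi : Odd i), V.g i hi = 0 ∨ Function.Bijective (V.g i hi))
    (hV : V.Indecomposable) :
    ∃ (a : WithBot ℤ) (b : WithTop ℤ), intervalLE a b ∧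
      ∃ φ : ZigzagHom V (intervalRep k a b), ∀ i, Function.Bijective (φ.h i) := by
  classical
  obtain ⟨i0, v0, hv0⟩ := hV.1
  -- a linear functional taking the value 1 on `v0`
  obtain ⟨l0, hl0⟩ : ∃ l0 : V.V i0 →ₗ[k] k, l0 v0 = 1 := by
    have hinj : LinearMap.ker (LinearMap.toSpanSingleton k (V.V i0) v0) = ⊥ := by
      rw [LinearMap.ker_eq_bot]
      intro c d hcd
      simp only [LinearMap.toSpanSingleton_apply] at hcd
      by_contra hne
      exact hv0 ((smul_eq_zero.1
        (show (c - d) • v0 = 0 by rw [sub_smul, hcd, sub_self])).resolve_left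
        (sub_ne_zero.2 hne))
    obtain ⟨g0, hg0⟩ :=
      (LinearMap.toSpanSingleton k (V.V i0) v0).exists_leftInverse_of_injective hinj
    refine ⟨g0, ?_⟩
    calc g0 v0 = g0 (LinearMap.toSpanSingleton k (V.V i0) v0 1) := by
          rw [LinearMap.toSpanSingleton_apply, one_smul]
      _ = 1 := by rw [← LinearMap.comp_apply, hg0]; rfl
  -- the transported idempotent endomorphism
  have ecommf : ∀ (i : ℤ) (hi : Odd i),
      (ZZaux.q V i0 v0 l0 (i - 1)).comp (V.f i hi) =
        (V.f i hi).comp (ZZaux.q V i0 v0 l0 i) := by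
    intro i hi
    apply LinearMap.ext; intro x
    simp only [LinearMap.comp_apply]
    rw [ZZaux.f_eq_dn V hi x, ZZaux.f_eq_dn V hi (ZZaux.q V i0 v0 l0 i x),
      ← ZZaux.q_cast V i0 v0 l0 (show i = (i - 1) + 1 by omega) x,
      ← ZZaux.q_comm_dn V i0 v0 l0 hf hg (i - 1)]
  have ecommg : ∀ (i : ℤ) (hi : Odd i),
      (ZZaux.q V i0 v0 l0 (i + 1)).comp (V.g i hi) =
        (V.g i hi).comp (ZZaux.q V i0 v0 l0 i) := by
    intro i hi
    apply LinearMap.ext; intro x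
    simp only [LinearMap.comp_apply]
    rw [ZZaux.g_eq_up V hi, ZZaux.q_comm_up V i0 v0 l0 hf hg i x]
  have hidem : ∀ j, (ZZaux.q V i0 v0 l0 j).comp (ZZaux.q V i0 v0 l0 j) = ZZaux.q V i0 v0 l0 j :=
    fun j => LinearMap.ext (ZZaux.q_idem V i0 v0 l0 hf hg hl0 j)
  rcases hV.2 ⟨fun j => ZZaux.q V i0 v0 l0 j, ecommf, ecommg⟩ hidem with hzero | hid
  · exfalso
    have h9 : ZZaux.q V i0 v0 l0 i0 = 0 := hzero i0
    have h10 : ZZaux.q V i0 v0 l0 i0 v0 = v0 := by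
      rw [ZZaux.q_apply]; simp [hl0]
    rw [h9] at h10
    exact hv0 (by simpa using h10.symm)
  -- every vector is a multiple of the transported vector
  have hspan : ∀ (j : ℤ) (x : V.V j), x = ZZaux.l V i0 l0 j x • ZZaux.u V i0 v0 j := by
    intro j x
    have h2 : ZZaux.q V i0 v0 l0 j x = x := by
      rw [show ZZaux.q V i0 v0 l0 j = LinearMap.id from hid j]; rfl
    rw [← ZZaux.q_apply, h2]
  -- the right endpoint
  have hB : ∃ b : WithTop ℤ, ((i0 : WithTop ℤ) ≤ b) ∧
      ∀ i : ℤ, i0 ≤ i → (((i : WithTop ℤ) ≤ b) ↔ ZZaux.u V i0 v0 i ≠ 0) := by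
    by_cases hbe : ∃ j, i0 ≤ j ∧ ZZaux.u V i0 v0 (j + 1) = 0
    · obtain ⟨jb, hjb, hleast⟩ := Int.exists_least_of_bdd ⟨i0, fun z hz => hz.1⟩ hbe
      refine ⟨(jb : WithTop ℤ), by exact_mod_cast hjb.1, ?_⟩
      intro i hi
      rw [WithTop.coe_le_coe]
      constructor
      · intro hij h0
        have hne : i ≠ i0 := by
          intro he; subst he; rw [ZZaux.u_i0] at h0; exact hv0 h0
        have h3 : i0 ≤ i - 1 ∧ ZZaux.u V i0 v0 ((i - 1) + 1) = 0 := by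
          constructor
          · omega
          · rw [ZZaux.u_cast V i0 v0 (show i = (i - 1) + 1 by omega), h0, map_zero]
        have := hleast (i - 1) h3
        omega
      · intro hne
        by_contra hgt
        exact hne (ZZaux.u_zero_up V i0 v0 (show i0 ≤ jb + 1 by omega) hjb.2 i (by omega))
    · refine ⟨⊤, le_top, fun i hi => ?_⟩
      simp only [le_top, true_iff]
      intro h0
      rcases eq_or_lt_of_le hi with he | hlt
      · subst he; rw [ZZaux.u_i0] at h0; exact hv0 h0
      · refine hbe ⟨i - 1, by omega, ?_⟩
        rw [ZZaux.u_cast V i0 v0 (show i = (i - 1) + 1 by omega), h0, map_zero]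
  obtain ⟨b, b_i0, char_b⟩ := hB
  -- the left endpoint
  have hA : ∃ a : WithBot ℤ, (a ≤ (i0 : WithBot ℤ)) ∧
      ∀ i : ℤ, i ≤ i0 → ((a ≤ (i : WithBot ℤ)) ↔ ZZaux.u V i0 v0 i ≠ 0) := by
    by_cases hae : ∃ j, j ≤ i0 ∧ ZZaux.u V i0 v0 (j - 1) = 0
    · obtain ⟨ja, hja, hgreat⟩ := Int.exists_greatest_of_bdd ⟨i0, fun z hz => hz.1⟩ hae
      refine ⟨(ja : WithBot ℤ), by exact_mod_cast hja.1, ?_⟩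
      intro i hi
      rw [WithBot.coe_le_coe]
      constructor
      · intro hij h0
        have hne : i ≠ i0 := by
          intro he; subst he; rw [ZZaux.u_i0] at h0; exact hv0 h0
        have h3 : i + 1 ≤ i0 ∧ ZZaux.u V i0 v0 ((i + 1) - 1) = 0 := by
          constructor
          · omega
          · rw [ZZaux.u_cast V i0 v0 (show i = (i + 1) - 1 by omega), h0, map_zero]
        have := hgreat (i + 1) h3
        omega
      · intro hne
        by_contra hgt
        exact hne (ZZaux.u_zero_dn V i0 v0 (show ja - 1 ≤ i0 by omega) hja.2 i (by omega))
    · refine ⟨⊥, bot_le, fun i hi => ?_⟩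
      simp only [bot_le, true_iff]
      intro h0
      rcases eq_or_lt_of_le hi with he | hlt
      · subst he; rw [ZZaux.u_i0] at h0; exact hv0 h0
      · refine hae ⟨i + 1, by omega, ?_⟩
        rw [ZZaux.u_cast V i0 v0 (show i = (i + 1) - 1 by omega), h0, map_zero]
  obtain ⟨a, a_i0, char_a⟩ := hA
  -- membership in the interval
  have hchar : ∀ i : ℤ, inIcc a b i ↔ ZZaux.u V i0 v0 i ≠ 0 := by
    intro i
    rcases le_total i0 i with hi | hi
    · have ha : a ≤ (i : WithBot ℤ) :=
        le_trans a_i0 (by exact_mod_cast hi)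
      rw [inIcc, and_iff_right ha]
      exact char_b i hi
    · have hb' : (i : WithTop ℤ) ≤ b :=
        le_trans (by exact_mod_cast hi) b_i0
      rw [inIcc, and_iff_left hb']
      exact char_a i hi
  -- the interval is nonempty
  have hle : intervalLE a b := by
    rw [intervalLE]
    cases' ha0 : a with n
    · exact bot_le
    · have h1 : (n : ℤ) ≤ i0 := by
        rw [ha0] at a_i0; exact_mod_cast a_i0
      rw [WithBot.map_coe]
      refine le_trans (WithBot.coe_le_coe.2 ?_) (WithBot.coe_le_coe.2 b_i0)
      exact_mod_cast h1
  refine ⟨a, b, hle, ⟨⟨fun i => LinearMap.pi fun _ => ZZaux.l V i0 l0 i, ?_, ?_⟩, ?_⟩⟩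
  · -- commf
    intro i hi
    apply LinearMap.ext; intro x
    funext hq
    have hq1 : ZZaux.u V i0 v0 (i - 1) ≠ 0 := (hchar (i - 1)).1 hq.down
    show ZZaux.l V i0 l0 (i - 1) (V.f i hi x) =
      (if hp : inIcc a b i then ZZaux.l V i0 l0 i x else 0)
    rw [ZZaux.f_eq_dn V hi x]
    rcases ZZaux.updn V hf hg (i - 1) with ⟨h1, h2⟩ | ⟨h1, h2⟩
    · have hui : ZZaux.u V i0 v0 i ≠ 0 := by
        rcases le_or_gt i0 (i - 1) with hc | hc
        · intro h0
          apply hq1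
          have e1 : ZZaux.u V i0 v0 ((i - 1) + 1) = 0 := by
            rw [ZZaux.u_cast V i0 v0 (show i = (i - 1) + 1 by omega), h0, map_zero]
          rw [ZZaux.uR V i0 v0 hc] at e1
          rw [← h1 (ZZaux.u V i0 v0 (i - 1)), e1, map_zero]
        · intro h0
          apply hq1
          rw [ZZaux.uL V i0 v0 (show (i - 1) + 1 ≤ i0 by omega),
            ZZaux.u_cast V i0 v0 (show i = (i - 1) + 1 by omega), h0, map_zero, map_zero]
      rw [dif_pos ((hchar i).2 hui)]
      rcases le_or_gt i0 (i - 1) with hc | hc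
      · rw [← ZZaux.lR V i0 l0 hc, ZZaux.l_cast]
      · rw [ZZaux.lL V i0 l0 (show (i - 1) + 1 ≤ i0 by omega), h2, ZZaux.l_cast]
    · have hui : ZZaux.u V i0 v0 i = 0 := by
        by_contra h0
        rcases le_or_gt i0 (i - 1) with hc | hc
        · apply h0
          have e1 := ZZaux.uR V i0 v0 hc
          rw [h1, LinearMap.zero_apply] at e1
          rw [ZZaux.u_cast V i0 v0 (show i = (i - 1) + 1 by omega)] at e1
          exact (ZZaux.cst_eq_zero V _ _).1 e1
        · apply hq1
          rw [ZZaux.uL V i0 v0 (show (i - 1) + 1 ≤ i0 by omega), h2, LinearMap.zero_apply]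
      rw [dif_neg (fun hp => ((hchar i).1 hp) hui), h2, LinearMap.zero_apply, map_zero]
  · -- commg
    intro i hi
    apply LinearMap.ext; intro x
    funext hq
    have hq1 : ZZaux.u V i0 v0 (i + 1) ≠ 0 := (hchar (i + 1)).1 hq.down
    show ZZaux.l V i0 l0 (i + 1) (V.g i hi x) =
      (if hp : inIcc a b i then ZZaux.l V i0 l0 i x else 0)
    rw [ZZaux.g_eq_up V hi]
    rcases ZZaux.updn V hf hg i with ⟨h1, h2⟩ | ⟨h1, h2⟩
    · have hui : ZZaux.u V i0 v0 i ≠ 0 := by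
        rcases le_or_gt i0 i with hc | hc
        · intro h0
          apply hq1
          rw [ZZaux.uR V i0 v0 hc, h0, map_zero]
        · intro h0
          apply hq1
          have e1 : ZZaux.dn V i (ZZaux.u V i0 v0 (i + 1)) = 0 := by
            rw [← ZZaux.uL V i0 v0 (show i + 1 ≤ i0 by omega)]; exact h0
          have e2 := h2 (ZZaux.u V i0 v0 (i + 1))
          rw [e1, map_zero] at e2
          exact e2.symm
      rw [dif_pos ((hchar i).2 hui)]
      rcases le_or_gt i0 i with hc | hc
      · rw [ZZaux.lR V i0 l0 hc, h1]
      · rw [ZZaux.lL V i0 l0 (show i + 1 ≤ i0 by omega)]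
    · have hui : ZZaux.u V i0 v0 i = 0 := by
        by_contra h0
        rcases le_or_gt i0 i with hc | hc
        · apply hq1
          rw [ZZaux.uR V i0 v0 hc, h1, LinearMap.zero_apply]
        · apply h0
          rw [ZZaux.uL V i0 v0 (show i + 1 ≤ i0 by omega), h2, LinearMap.zero_apply]
      rw [dif_neg (fun hp => ((hchar i).1 hp) hui), h1, LinearMap.zero_apply, map_zero]
  · -- bijectivity
    intro i
    by_cases hui : ZZaux.u V i0 v0 i = 0
    · have htriv : ∀ x : V.V i, x = 0 := fun x => by rw [hspan i x, hui, smul_zero]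
      have hp : ¬ inIcc a b i := fun hp => (hchar i).1 hp hui
      constructor
      · intro x y _
        rw [htriv x, htriv y]
      · intro w
        refine ⟨0, ?_⟩
        funext hq
        exact absurd hq.down hp
    · have hp : inIcc a b i := (hchar i).2 hui
      have hl1 : ZZaux.l V i0 l0 i (ZZaux.u V i0 v0 i) = 1 := by
        by_contra hne
        apply hui
        have h6 : (ZZaux.l V i0 l0 i (ZZaux.u V i0 v0 i) - 1) • ZZaux.u V i0 v0 i = 0 := by
          rw [sub_smul, one_smul, ← hspan i (ZZaux.u V i0 v0 i), sub_self]
        rcases smul_eq_zero.1 h6 with h7 | h7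
        · exact absurd (by rwa [sub_eq_zero] at h7) hne
        · exact h7
      constructor
      · intro x y hxy
        have h8 : ZZaux.l V i0 l0 i x = ZZaux.l V i0 l0 i y := congrFun hxy ⟨hp⟩
        rw [hspan i x, hspan i y, h8]
      · intro w
        refine ⟨w ⟨hp⟩ • ZZaux.u V i0 v0 i, ?_⟩
        funext hq
        show ZZaux.l V i0 l0 i (w ⟨hp⟩ • ZZaux.u V i0 v0 i) = w hq
        rw [map_smul, smul_eq_mul, hl1, mul_one]
end

section
/- Let A be an artin algebra with rad²(A) = 0, J = rad A, and A^s = (A/J, 0; J, A/J). The functor S : Mod A → Mod A^s sending M to the column (M/JM; JM) satisfies: M ≅ N if and only if S(M) ≅ S(N). -/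
/-- The Jacobson radical `J = rad A` of a ring, as a module over `A`. -/
abbrev JacMod (A : Type) [Ring A] : Type := ↥(Ideal.jacobson (⊥ : Ideal A))

/-- The separated algebra `A^s = (A/J, 0; J, A/J)` of a radical square zero artin algebra,
realized as the trivial square-zero extension of `(A/J) × (A/J)` by the bimodule `J`
(the left action through the second factor, the right action through the first factor,
corresponding to lower-triangular 2×2 matrix multiplication). -/
abbrev SepAlg (A : Type) [Ring A] (S : Type) [Ring S]
    [Module (S × S) (JacMod A)] [Module (S × S)ᵐᵒᵖ (JacMod A)]
    [SMulCommClass (S × S) (S × S)ᵐᵒᵖ (JacMod A)] : Type :=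
  TrivSqZeroExt (S × S) (JacMod A)

/-- The submodule `JM ⊆ M` generated by the elements `j • m`, `j ∈ J = rad A`. -/
noncomputable def radSubmodule (A : Type) [Ring A] (M : Type) [AddCommGroup M]
    [Module A M] : Submodule A M :=
  Submodule.span A {x : M | ∃ j ∈ Ideal.jacobson (⊥ : Ideal A), ∃ m : M, j • m = x}

/-- The underlying abelian group of the separated module `S(M) = (M/JM; JM)`. -/
abbrev SepMod (A : Type) [Ring A] (M : Type) [AddCommGroup M] [Module A M] : Type :=
  (M ⧸ radSubmodule A M) × ↥(radSubmodule A M)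

set_option maxHeartbeats 1000000

section Semi
variable {B W : Type*} [Ring B] [AddCommGroup W] [Module B W]

lemma ss_of_subsingleton [Subsingleton W] : IsSemisimpleModule B W := by
  refine { toComplementedLattice := ⟨?_⟩ }
  intro p
  refine ⟨⊤, ?_⟩
  have : p = ⊥ := Subsingleton.elim _ _
  rw [this]
  exact isCompl_bot_top

lemma ss_of_injective {Z : Type*} [AddCommGroup Z] [Module B Z] [IsSemisimpleModule B Z]
    (f : W →ₗ[B] Z) (hf : Function.Injective f) : IsSemisimpleModule B W :=
  IsSemisimpleModule.congr (LinearEquiv.ofInjective f hf)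

lemma ss_prod {W₁ W₂ : Type*} [AddCommGroup W₁] [Module B W₁] [AddCommGroup W₂] [Module B W₂]
    [IsSemisimpleModule B W₁] [IsSemisimpleModule B W₂] :
    IsSemisimpleModule B (W₁ × W₂) := by
  have h1 : IsSemisimpleModule B (LinearMap.range (LinearMap.inl B W₁ W₂)) :=
    IsSemisimpleModule.congr (LinearEquiv.ofInjective _ LinearMap.inl_injective).symm
  have h2 : IsSemisimpleModule B (LinearMap.range (LinearMap.inr B W₁ W₂)) :=
    IsSemisimpleModule.congr (LinearEquiv.ofInjective _ LinearMap.inr_injective).symm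
  have hsup := IsSemisimpleModule.sup h1 h2
  have htop : LinearMap.range (LinearMap.inl B W₁ W₂) ⊔ LinearMap.range (LinearMap.inr B W₁ W₂)
      = ⊤ := by
    rw [Submodule.eq_top_iff']
    intro x
    exact Submodule.mem_sup.2 ⟨(x.1, 0), ⟨x.1, rfl⟩, (0, x.2), ⟨x.2, rfl⟩, by simp⟩
  rw [htop] at hsup
  exact IsSemisimpleModule.congr Submodule.topEquiv.symm

lemma ss_of_finset_coatoms (T : Finset (Submodule B W)) (hT : ∀ m ∈ T, IsCoatom m)
    (hbot : T.inf id = ⊥) : IsSemisimpleModule B W := by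
  suffices h : ∀ T : Finset (Submodule B W), (∀ m ∈ T, IsCoatom m) →
      IsSemisimpleModule B (W ⧸ T.inf id) by
    have := h T hT
    rw [hbot] at this
    exact IsSemisimpleModule.congr (Submodule.quotEquivOfEqBot _ rfl).symm
  clear hbot hT T
  classical
  intro T
  induction T using Finset.induction_on with
  | empty =>
    intro _
    have h0 : (∅ : Finset (Submodule B W)).inf id = ⊤ := rfl
    rw [h0]
    have : Subsingleton (W ⧸ (⊤ : Submodule B W)) := Submodule.Quotient.subsingleton_iff.2 rfl
    exact ss_of_subsingleton
  | @insert m T hm ih =>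
    intro hco
    have hmco : IsCoatom m := hco m (Finset.mem_insert_self m T)
    have ihT : IsSemisimpleModule B (W ⧸ T.inf id) :=
      ih fun x hx => hco x (Finset.mem_insert_of_mem hx)
    rw [Finset.inf_insert]
    set I := T.inf id
    have hsimple : IsSimpleModule B (W ⧸ m) := isSimpleModule_iff_isCoatom.2 hmco
    have hprod : IsSemisimpleModule B ((W ⧸ m) × (W ⧸ I)) := ss_prod
    set f : W ⧸ (id m ⊓ I) →ₗ[B] (W ⧸ m) × (W ⧸ I) :=
      LinearMap.prod
        (Submodule.mapQ _ m LinearMap.id (by simp))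
        (Submodule.mapQ _ I LinearMap.id (by simp)) with hf
    apply ss_of_injective f
    rw [← LinearMap.ker_eq_bot]
    ext x
    simp only [Submodule.mem_bot, LinearMap.mem_ker]
    constructor
    · intro hx
      obtain ⟨w, rfl⟩ := Submodule.Quotient.mk_surjective _ x
      simp only [hf, LinearMap.prod_apply, Submodule.mapQ_apply, LinearMap.id_apply,
        Function.prod, Prod.mk_eq_zero] at hx
      rw [Submodule.Quotient.mk_eq_zero]
      obtain ⟨h1, h2⟩ := hx
      rw [Submodule.Quotient.mk_eq_zero] at h1
      rw [Submodule.Quotient.mk_eq_zero] at h2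
      exact ⟨h1, h2⟩
    · rintro rfl; simp

end Semi

lemma ss_ring_of_artinian_jacobson_bot (S : Type*) [Ring S] [IsArtinianRing S]
    (hJ : Ideal.jacobson (⊥ : Ideal S) = ⊥) : IsSemisimpleRing S := by
  classical
  set 𝒮 : Set (Ideal S) :=
    {I | ∃ T : Finset (Ideal S), (∀ m ∈ T, IsCoatom m) ∧ I = T.inf id} with h𝒮
  have hne : 𝒮.Nonempty := ⟨⊤, ∅, by simp, rfl⟩
  obtain ⟨I₀, hI₀mem, hI₀min⟩ := IsArtinian.set_has_minimal 𝒮 hne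
  obtain ⟨T, hT, rfl⟩ := hI₀mem
  have hle : T.inf id ≤ Ideal.jacobson (⊥ : Ideal S) := by
    apply le_sInf
    rintro m ⟨-, hmax⟩
    have hco : IsCoatom m := Ideal.isMaximal_def.1 hmax
    have hmem : (insert m T).inf id ∈ 𝒮 :=
      ⟨insert m T, fun x hx => (Finset.mem_insert.1 hx).elim (fun h => h ▸ hco) (hT x), rfl⟩
    have hle' : (insert m T).inf id ≤ T.inf id := by
      rw [Finset.inf_insert]; exact inf_le_right
    have : ¬ (insert m T).inf id < T.inf id := hI₀min _ hmem
    have heq : (insert m T).inf id = T.inf id := le_antisymm hle' (by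
      by_contra h
      exact this (lt_of_le_of_ne hle' (fun hh => h (hh ▸ le_rfl))))
    calc T.inf id = (insert m T).inf id := heq.symm
      _ ≤ id m := by rw [Finset.inf_insert]; exact inf_le_left
  rw [hJ, le_bot_iff] at hle
  exact ss_of_finset_coatoms T hT hle

section Rad
variable {A : Type} [Ring A] {M : Type} [AddCommGroup M] [Module A M]

lemma smul_mem_rad {j : A} (hj : j ∈ Ideal.jacobson (⊥ : Ideal A)) (m : M) :
    j • m ∈ radSubmodule A M :=
  Submodule.subset_span ⟨j, hj, m, rfl⟩

lemma jac_mul_mem {j a : A} (hj : j ∈ Ideal.jacobson (⊥ : Ideal A)) :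
    j * a ∈ Ideal.jacobson (⊥ : Ideal A) :=
  Ideal.mul_mem_right a _ hj

lemma rad_smul_zero (hJ2 : ∀ x ∈ Ideal.jacobson (⊥ : Ideal A),
      ∀ y ∈ Ideal.jacobson (⊥ : Ideal A), x * y = 0)
    {j : A} (hj : j ∈ Ideal.jacobson (⊥ : Ideal A)) {u : M} (hu : u ∈ radSubmodule A M) :
    j • u = 0 := by
  suffices h : ∀ u ∈ radSubmodule A M, ∀ j ∈ Ideal.jacobson (⊥ : Ideal A), j • u = 0 from
    h u hu j hj
  clear hj hu
  intro u hu
  induction hu using Submodule.span_induction with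
  | mem x hx =>
    intro j hj
    obtain ⟨j', hj', m, rfl⟩ := hx
    rw [smul_smul, hJ2 j hj j' hj', zero_smul]
  | zero => simp
  | add x y _ _ hx hy => intro j hj; rw [smul_add, hx j hj, hy j hj, add_zero]
  | smul a x _ ih =>
    intro j hj
    rw [smul_smul]
    exact ih (j * a) (jac_mul_mem hj)

lemma mk_rad_smul {j : A} (hj : j ∈ Ideal.jacobson (⊥ : Ideal A)) (m : M) :
    (Submodule.Quotient.mk (j • m) : M ⧸ radSubmodule A M) = 0 :=
  (Submodule.Quotient.mk_eq_zero _).2 (smul_mem_rad hj m)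

end Rad

section Compl
variable {A S : Type} [Ring A] [Ring S]

lemma exists_compl_of_jac_smul_zero (π : A →+* S) (hπ : Function.Surjective π)
    (hker : ∀ a : A, π a = 0 ↔ a ∈ Ideal.jacobson (⊥ : Ideal A)) (hss : IsSemisimpleRing S)
    (V : Type) [AddCommGroup V] [Module A V]
    (h0 : ∀ j ∈ Ideal.jacobson (⊥ : Ideal A), ∀ v : V, j • v = 0) (D : Submodule A V) :
    ∃ C : Submodule A V, IsCompl D C := by
  classical
  have key : ∀ a b : A, π a = π b → ∀ v : V, a • v = b • v := by
    intro a b hab v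
    have h1 : (a - b) • v = 0 := by
      apply h0
      rw [← hker]
      rw [map_sub, hab, sub_self]
    have h2 := sub_smul a b v
    rw [h1] at h2
    exact sub_eq_zero.1 h2.symm
  set σ : S → A := Function.surjInv hπ with hσdef
  have hσ : ∀ s, π (σ s) = s := fun s => Function.surjInv_eq hπ s
  letI modS : Module S V :=
    { smul := fun s v => σ s • v
      one_smul := fun v => by
        show σ 1 • v = v
        rw [key (σ 1) 1 (by rw [hσ, map_one]), one_smul]
      mul_smul := fun s t v => by
        show σ (s * t) • v = σ s • σ t • v
        rw [key (σ (s * t)) (σ s * σ t) (by rw [hσ, map_mul, hσ, hσ]), mul_smul]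
      smul_zero := fun s => smul_zero (σ s)
      smul_add := fun s v w => smul_add (σ s) v w
      add_smul := fun s t v => by
        show σ (s + t) • v = σ s • v + σ t • v
        rw [key (σ (s + t)) (σ s + σ t) (by rw [hσ, map_add, hσ, hσ]), add_smul]
      zero_smul := fun v => by
        show σ 0 • v = 0
        rw [key (σ 0) 0 (by rw [hσ, map_zero]), zero_smul] }
  have key2 : ∀ (a : A) (v : V), (π a : S) • v = a • v := by
    intro a v
    show σ (π a) • v = a • v
    exact key _ _ (hσ _) v
  haveI := hss
  haveI : IsSemisimpleModule S V := inferInstance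
  set D_S : Submodule S V :=
    { carrier := D
      add_mem' := fun ha hb => D.add_mem ha hb
      zero_mem' := D.zero_mem
      smul_mem' := by
        intro s v hv
        obtain ⟨a, rfl⟩ := hπ s
        show (π a : S) • v ∈ D
        rw [key2]
        exact D.smul_mem a hv } with hDS
  obtain ⟨C_S, hCS⟩ := exists_isCompl D_S
  set C : Submodule A V :=
    { carrier := C_S
      add_mem' := fun ha hb => C_S.add_mem ha hb
      zero_mem' := C_S.zero_mem
      smul_mem' := by
        intro a v hv
        show a • v ∈ C_S
        rw [← key2]
        exact C_S.smul_mem (π a) hv } with hC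
  refine ⟨C, ?_, ?_⟩
  · rw [Submodule.disjoint_def]
    intro x hxD hxC
    have : x ∈ D_S ⊓ C_S := ⟨hxD, hxC⟩
    rwa [hCS.disjoint.eq_bot, Submodule.mem_bot] at this
  · rw [codisjoint_iff_le_sup]
    intro x _
    have : x ∈ D_S ⊔ C_S := by rw [hCS.codisjoint.eq_top]; trivial
    obtain ⟨y, hy, z, hz, rfl⟩ := Submodule.mem_sup.1 this
    exact Submodule.add_mem_sup (S := D) (T := C) hy hz

end Compl

section Recon
variable {A : Type} [Ring A] {M N : Type} [AddCommGroup M] [Module A M]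
  [AddCommGroup N] [Module A N]

lemma recon
    (hcompl : ∀ (V : Type) [AddCommGroup V], ∀ [Module A V],
      (∀ j ∈ Ideal.jacobson (⊥ : Ideal A), ∀ v : V, j • v = 0) →
      ∀ D : Submodule A V, ∃ C : Submodule A V, IsCompl D C)
    (f₀ : (M ⧸ radSubmodule A M) ≃ₗ[A] (N ⧸ radSubmodule A N))
    (f₁ : ↥(radSubmodule A M) ≃ₗ[A] ↥(radSubmodule A N))
    (compat : ∀ (j : A) (hj : j ∈ Ideal.jacobson (⊥ : Ideal A)) (m : M) (n : N),
      f₀ (Submodule.Quotient.mk m) = Submodule.Quotient.mk n →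
      ((f₁ ⟨j • m, smul_mem_rad hj m⟩ : ↥(radSubmodule A N)) : N) = j • n) :
    Nonempty (M ≃ₗ[A] N) := by
  classical
  -- the pullback submodule
  set P : Submodule A (M × N) :=
    { carrier := {p | f₀ (Submodule.Quotient.mk p.1) = Submodule.Quotient.mk p.2}
      add_mem' := by
        intro a b ha hb
        show f₀ (Submodule.Quotient.mk (a.1 + b.1)) = Submodule.Quotient.mk (a.2 + b.2)
        rw [Submodule.Quotient.mk_add, Submodule.Quotient.mk_add, map_add, ha, hb]
      zero_mem' := by
        show f₀ (Submodule.Quotient.mk 0) = Submodule.Quotient.mk 0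
        simp
      smul_mem' := by
        intro c a ha
        show f₀ (Submodule.Quotient.mk (c • a.1)) = Submodule.Quotient.mk (c • a.2)
        rw [Submodule.Quotient.mk_smul, Submodule.Quotient.mk_smul, map_smul, ha] } with hP
  have memP : ∀ p : M × N, p ∈ P ↔
      f₀ (Submodule.Quotient.mk p.1) = Submodule.Quotient.mk p.2 := fun p => Iff.rfl
  -- the graph of f₁
  set g : ↥(radSubmodule A M) →ₗ[A] M × N := LinearMap.prod (radSubmodule A M).subtype ((radSubmodule A N).subtype ∘ₗ f₁.toLinearMap) with hg
  set G : Submodule A (M × N) := LinearMap.range g with hG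
  have memG : ∀ p : M × N, p ∈ G ↔ ∃ u : ↥(radSubmodule A M), ((u : M), ((f₁ u : ↥(radSubmodule A N)) : N)) = p := by
    intro p
    constructor
    · rintro ⟨u, rfl⟩; exact ⟨u, rfl⟩
    · rintro ⟨u, rfl⟩; exact ⟨u, rfl⟩
  set KM : Submodule A (M × N) := (radSubmodule A M).map (LinearMap.inl A M N) with hKM
  set KN : Submodule A (M × N) := (radSubmodule A N).map (LinearMap.inr A M N) with hKN
  have memKM : ∀ p : M × N, p ∈ KM ↔ p.1 ∈ (radSubmodule A M) ∧ p.2 = 0 := by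
    intro p
    constructor
    · rintro ⟨u, hu, rfl⟩; exact ⟨hu, rfl⟩
    · rintro ⟨h1, h2⟩
      exact ⟨p.1, h1, by ext <;> simp [h2.symm]⟩
  have memKN : ∀ p : M × N, p ∈ KN ↔ p.1 = 0 ∧ p.2 ∈ (radSubmodule A N) := by
    intro p
    constructor
    · rintro ⟨u, hu, rfl⟩; exact ⟨rfl, hu⟩
    · rintro ⟨h1, h2⟩
      exact ⟨p.2, h2, by ext <;> simp [h1.symm]⟩
  have hG_P : G ≤ P := by
    rintro x ⟨u, rfl⟩
    show f₀ (Submodule.Quotient.mk ((u : M))) = Submodule.Quotient.mk ((f₁ u : ↥(radSubmodule A N)) : N)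
    rw [(Submodule.Quotient.mk_eq_zero (radSubmodule A M)).2 u.2]
    rw [(Submodule.Quotient.mk_eq_zero (radSubmodule A N)).2 (f₁ u).2]
    simp
  have hKM_P : KM ≤ P := by
    intro x hx
    obtain ⟨h1, h2⟩ := (memKM x).1 hx
    show f₀ (Submodule.Quotient.mk x.1) = Submodule.Quotient.mk x.2
    rw [(Submodule.Quotient.mk_eq_zero (radSubmodule A M)).2 h1, h2]
    simp
  have hKN_P : KN ≤ P := by
    intro x hx
    obtain ⟨h1, h2⟩ := (memKN x).1 hx
    show f₀ (Submodule.Quotient.mk x.1) = Submodule.Quotient.mk x.2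
    rw [h1, (Submodule.Quotient.mk_eq_zero (radSubmodule A N)).2 h2]
    simp
  -- inside ↥P
  set G' : Submodule A ↥P := G.comap P.subtype with hG'
  set D' : Submodule A ↥P := ((radSubmodule A M).prod (radSubmodule A N)).comap P.subtype with hD'
  have hV0 : ∀ j ∈ Ideal.jacobson (⊥ : Ideal A), ∀ v : ↥P ⧸ G', j • v = 0 := by
    intro j hj v
    obtain ⟨x, rfl⟩ := Submodule.Quotient.mk_surjective _ v
    rw [← Submodule.Quotient.mk_smul, Submodule.Quotient.mk_eq_zero]
    show ((j • x : ↥P) : M × N) ∈ G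
    have hx := x.2
    rw [memP] at hx
    rw [memG]
    refine ⟨⟨j • (x : M × N).1, smul_mem_rad hj _⟩, Prod.ext ?_ ?_⟩
    · rfl
    · exact compat j hj (x : M × N).1 (x : M × N).2 hx
  obtain ⟨C₀, hC₀⟩ := hcompl (↥P ⧸ G') hV0 (D'.map G'.mkQ)
  set C : Submodule A ↥P := C₀.comap G'.mkQ with hC
  have hG'C : G' ≤ C := by
    intro x hx
    show G'.mkQ x ∈ C₀
    have h0 : G'.mkQ x = 0 := (Submodule.Quotient.mk_eq_zero G').2 hx
    rw [h0]
    exact C₀.zero_mem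
  -- disjointness facts
  have hdisj : ∀ x : ↥P, x ∈ C → (x : M × N) ∈ (radSubmodule A M).prod (radSubmodule A N) → (x : M × N) ∈ G := by
    intro x hxC hxD
    have h1 : G'.mkQ x ∈ C₀ := hxC
    have h2 : G'.mkQ x ∈ D'.map G'.mkQ := Submodule.mem_map_of_mem hxD
    have h3 : G'.mkQ x = 0 := by
      have := Submodule.disjoint_def.1 hC₀.disjoint _ h2 h1
      exact this
    exact (Submodule.Quotient.mk_eq_zero G').1 h3
  have factKM_disj : ∀ x : ↥P, x ∈ C → (x : M × N) ∈ KM → x = 0 := by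
    intro x hxC hxKM
    obtain ⟨h1, h2⟩ := (memKM _).1 hxKM
    have hxG : (x : M × N) ∈ G := hdisj x hxC (by
      constructor
      · exact h1
      · show (x : M × N).2 ∈ (radSubmodule A N); rw [h2]; exact (radSubmodule A N).zero_mem)
    obtain ⟨u, hu⟩ := (memG _).1 hxG
    have h2' : ((f₁ u : ↥(radSubmodule A N)) : N) = 0 := by rw [← hu] at h2; exact h2
    have hu0 : u = 0 := f₁.injective (by rw [map_zero]; exact Subtype.ext h2')
    apply Subtype.ext
    rw [← hu, hu0]
    simp
  have factKN_disj : ∀ x : ↥P, x ∈ C → (x : M × N) ∈ KN → x = 0 := by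
    intro x hxC hxKN
    obtain ⟨h1, h2⟩ := (memKN _).1 hxKN
    have hxG : (x : M × N) ∈ G := hdisj x hxC (by
      constructor
      · show (x : M × N).1 ∈ (radSubmodule A M); rw [h1]; exact (radSubmodule A M).zero_mem
      · exact h2)
    obtain ⟨u, hu⟩ := (memG _).1 hxG
    have h1' : (u : M) = 0 := by rw [← hu] at h1; exact h1
    have hu0 : u = 0 := Subtype.ext h1'
    apply Subtype.ext
    rw [← hu, hu0]
    simp
  -- decomposition facts
  have hdecomp : ∀ x : ↥P, ∃ c d : ↥P, c ∈ C ∧ (d : M × N) ∈ (radSubmodule A M).prod (radSubmodule A N) ∧ x = c + d := by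
    intro x
    have htop : G'.mkQ x ∈ (D'.map G'.mkQ) ⊔ C₀ := by
      rw [hC₀.codisjoint.eq_top]; trivial
    obtain ⟨db, hdb, cb, hcb, hsum⟩ := Submodule.mem_sup.1 htop
    obtain ⟨d, hd, rfl⟩ := Submodule.mem_map.1 hdb
    refine ⟨x - d, d, ?_, hd, by abel⟩
    show G'.mkQ (x - d) ∈ C₀
    rw [map_sub]
    have : G'.mkQ x - G'.mkQ d = cb := by rw [← hsum]; abel
    rw [this]
    exact hcb
  have factKM_sup : ∀ x : ↥P, ∃ c k : ↥P, c ∈ C ∧ (k : M × N) ∈ KM ∧ x = c + k := by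
    intro x
    obtain ⟨c, d, hc, hd, rfl⟩ := hdecomp x
    set w : ↥(radSubmodule A M) := f₁.symm ⟨(d : M × N).2, hd.2⟩ with hw
    set gp : ↥P := ⟨g w, hG_P ⟨w, rfl⟩⟩ with hgp
    have hgpC : gp ∈ C := hG'C (show (gp : M × N) ∈ G from ⟨w, rfl⟩)
    refine ⟨c + gp, d - gp, C.add_mem hc hgpC, ?_, by abel⟩
    rw [memKM]
    constructor
    · show (d : M × N).1 - (gp : M × N).1 ∈ (radSubmodule A M)
      have : (gp : M × N).1 = (w : M) := rfl
      rw [this]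
      exact (radSubmodule A M).sub_mem hd.1 w.2
    · show (d : M × N).2 - (gp : M × N).2 = 0
      have : (gp : M × N).2 = ((f₁ w : ↥(radSubmodule A N)) : N) := rfl
      rw [this, hw, f₁.apply_symm_apply]
      simp
  have factKN_sup : ∀ x : ↥P, ∃ c k : ↥P, c ∈ C ∧ (k : M × N) ∈ KN ∧ x = c + k := by
    intro x
    obtain ⟨c, d, hc, hd, rfl⟩ := hdecomp x
    set w : ↥(radSubmodule A M) := ⟨(d : M × N).1, hd.1⟩ with hw
    set gp : ↥P := ⟨g w, hG_P ⟨w, rfl⟩⟩ with hgp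
    have hgpC : gp ∈ C := hG'C (show (gp : M × N) ∈ G from ⟨w, rfl⟩)
    refine ⟨c + gp, d - gp, C.add_mem hc hgpC, ?_, by abel⟩
    rw [memKN]
    constructor
    · show (d : M × N).1 - (gp : M × N).1 = 0
      have : (gp : M × N).1 = (w : M) := rfl
      rw [this, hw]
      simp
    · show (d : M × N).2 - (gp : M × N).2 ∈ (radSubmodule A N)
      have : (gp : M × N).2 = ((f₁ w : ↥(radSubmodule A N)) : N) := rfl
      rw [this]
      exact (radSubmodule A N).sub_mem hd.2 (f₁ w).2
  -- the two projections
  set φM : ↥C →ₗ[A] M := (LinearMap.fst A M N) ∘ₗ (P.subtype ∘ₗ C.subtype) with hφM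
  set φN : ↥C →ₗ[A] N := (LinearMap.snd A M N) ∘ₗ (P.subtype ∘ₗ C.subtype) with hφN
  have φM_apply : ∀ x : ↥C, φM x = ((x : ↥P) : M × N).1 := fun x => rfl
  have φN_apply : ∀ x : ↥C, φN x = ((x : ↥P) : M × N).2 := fun x => rfl
  have injM : Function.Injective φM := by
    rw [injective_iff_map_eq_zero]
    intro x hx
    rw [φM_apply] at hx
    have hmem : ((x : ↥P) : M × N) ∈ KN := by
      rw [memKN]
      refine ⟨hx, ?_⟩
      have hp := (x : ↥P).2
      rw [memP] at hp
      rw [hx] at hp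
      rw [Submodule.Quotient.mk_zero, map_zero] at hp
      exact (Submodule.Quotient.mk_eq_zero (radSubmodule A N)).1 hp.symm
    have := factKN_disj (x : ↥P) x.2 hmem
    exact Subtype.ext this
  have injN : Function.Injective φN := by
    rw [injective_iff_map_eq_zero]
    intro x hx
    rw [φN_apply] at hx
    have hmem : ((x : ↥P) : M × N) ∈ KM := by
      rw [memKM]
      refine ⟨?_, hx⟩
      have hp := (x : ↥P).2
      rw [memP] at hp
      rw [hx] at hp
      rw [Submodule.Quotient.mk_zero] at hp
      have : Submodule.Quotient.mk ((x : ↥P) : M × N).1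
          = (0 : M ⧸ radSubmodule A M) := by
        apply f₀.injective
        rw [hp, map_zero]
      exact (Submodule.Quotient.mk_eq_zero (radSubmodule A M)).1 this
    have := factKM_disj (x : ↥P) x.2 hmem
    exact Subtype.ext this
  have surjM : Function.Surjective φM := by
    intro m
    obtain ⟨n, hn⟩ := Submodule.Quotient.mk_surjective (radSubmodule A N)
      (f₀ (Submodule.Quotient.mk m))
    have hmemP : ((m, n) : M × N) ∈ P := by rw [memP]; exact hn.symm
    obtain ⟨c, k, hc, hk, hsum⟩ := factKN_sup ⟨(m, n), hmemP⟩
    refine ⟨⟨c, hc⟩, ?_⟩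
    rw [φM_apply]
    have hk1 : (k : M × N).1 = 0 := ((memKN _).1 hk).1
    have : ((⟨(m, n), hmemP⟩ : ↥P) : M × N).1 = (c : M × N).1 + (k : M × N).1 := by
      rw [hsum]; rfl
    simp only [hk1, add_zero] at this
    exact this.symm
  have surjN : Function.Surjective φN := by
    intro n
    obtain ⟨q, hq⟩ := Submodule.Quotient.mk_surjective (radSubmodule A M)
      (f₀.symm (Submodule.Quotient.mk n))
    have hmemP : ((q, n) : M × N) ∈ P := by
      rw [memP]
      rw [hq, f₀.apply_symm_apply]
    obtain ⟨c, k, hc, hk, hsum⟩ := factKM_sup ⟨(q, n), hmemP⟩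
    refine ⟨⟨c, hc⟩, ?_⟩
    rw [φN_apply]
    have hk2 : (k : M × N).2 = 0 := ((memKM _).1 hk).2
    have : ((⟨(q, n), hmemP⟩ : ↥P) : M × N).2 = (c : M × N).2 + (k : M × N).2 := by
      rw [hsum]; rfl
    simp only [hk2, add_zero] at this
    exact this.symm
  exact ⟨(LinearEquiv.ofBijective φM ⟨injM, surjM⟩).symm.trans
    (LinearEquiv.ofBijective φN ⟨injN, surjN⟩)⟩

end Recon

section MapRad
variable {A : Type} [Ring A] {M N : Type} [AddCommGroup M] [Module A M]
  [AddCommGroup N] [Module A N]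

lemma map_rad_le (f : M →ₗ[A] N) : (radSubmodule A M).map f ≤ radSubmodule A N := by
  rw [radSubmodule, Submodule.map_span, Submodule.span_le]
  rintro _ ⟨x, ⟨j, hj, m, rfl⟩, rfl⟩
  rw [map_smul]
  exact smul_mem_rad hj (f m)

lemma map_rad_eq (e : M ≃ₗ[A] N) :
    Submodule.map (e : M →ₗ[A] N) (radSubmodule A M) = radSubmodule A N := by
  refine le_antisymm (map_rad_le _) ?_
  intro x hx
  have h1 : e.symm x ∈ radSubmodule A M :=
    map_rad_le (e.symm : N →ₗ[A] M) (Submodule.mem_map_of_mem hx)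
  exact ⟨e.symm x, h1, by simp⟩

end MapRad

/-- Let `A` be an artin algebra with `rad² A = 0`, `J = rad A`, and
`A^s = (A/J, 0; J, A/J)`.  The functor `S : Mod A → Mod A^s`, `M ↦ (M/JM; JM)` (where the
`A^s`-action is `(x,y;j) • (m̄, u) = (x m̄, y u + j m̄)`), satisfies: `M ≅ N` if and only if
`S(M) ≅ S(N)`. -/
theorem separated_functor_reflects_isomorphism
    (R : Type) [CommRing R] [IsArtinianRing R]
    (A : Type) [Ring A] [Algebra R A] [Module.Finite R A]
    (hJ2 : ∀ x ∈ Ideal.jacobson (⊥ : Ideal A), ∀ y ∈ Ideal.jacobson (⊥ : Ideal A),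
      x * y = 0)
    (S : Type) [Ring S] (π : A →+* S) (hπ : Function.Surjective π)
    (hker : ∀ a : A, π a = 0 ↔ a ∈ Ideal.jacobson (⊥ : Ideal A))
    [Module (S × S) (JacMod A)] [Module (S × S)ᵐᵒᵖ (JacMod A)]
    [SMulCommClass (S × S) (S × S)ᵐᵒᵖ (JacMod A)]
    (hL : ∀ (x y : A) (m : JacMod A),
      ((((π x, π y) : S × S) • m : JacMod A) : A) = y * (m : A))
    (hR : ∀ (x y : A) (m : JacMod A),
      (((MulOpposite.op ((π x, π y) : S × S)) • m : JacMod A) : A) = (m : A) * x)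
    -- the `A`-modules `M` and `N` and the `A^s`-module structures on `S(M)`, `S(N)`
    (M : Type) [AddCommGroup M] [Module A M]
    (N : Type) [AddCommGroup N] [Module A N]
    [Module (SepAlg A S) (SepMod A M)] [Module (SepAlg A S) (SepMod A N)]
    (hM1 : ∀ (x y : A) (p : SepMod A M),
      (TrivSqZeroExt.inl ((π x, π y) : S × S) : SepAlg A S) • p = (x • p.1, y • p.2))
    (hM2 : ∀ (j : JacMod A) (m : M) (u : ↥(radSubmodule A M)),
      ((TrivSqZeroExt.inr j : SepAlg A S) •
          ((Submodule.Quotient.mk m, u) : SepMod A M)).1 = 0 ∧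
      ((((TrivSqZeroExt.inr j : SepAlg A S) •
          ((Submodule.Quotient.mk m, u) : SepMod A M)).2 : M)) = (j : A) • m)
    (hN1 : ∀ (x y : A) (p : SepMod A N),
      (TrivSqZeroExt.inl ((π x, π y) : S × S) : SepAlg A S) • p = (x • p.1, y • p.2))
    (hN2 : ∀ (j : JacMod A) (n : N) (u : ↥(radSubmodule A N)),
      ((TrivSqZeroExt.inr j : SepAlg A S) •
          ((Submodule.Quotient.mk n, u) : SepMod A N)).1 = 0 ∧
      ((((TrivSqZeroExt.inr j : SepAlg A S) •
          ((Submodule.Quotient.mk n, u) : SepMod A N)).2 : N)) = (j : A) • n) :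
    Nonempty (M ≃ₗ[A] N) ↔
      Nonempty ((SepMod A M) ≃ₗ[SepAlg A S] (SepMod A N)) := by
  classical
  constructor
  · -- forward direction
    rintro ⟨e⟩
    set F0 : (M ⧸ radSubmodule A M) ≃ₗ[A] (N ⧸ radSubmodule A N) :=
      Submodule.Quotient.equiv _ _ e (map_rad_eq e) with hF0
    set F1 : ↥(radSubmodule A M) ≃ₗ[A] ↥(radSubmodule A N) :=
      (e.submoduleMap (radSubmodule A M)).trans
        (LinearEquiv.ofEq _ _ (map_rad_eq e)) with hF1
    have hF0mk : ∀ m : M, F0 (Submodule.Quotient.mk m) = Submodule.Quotient.mk (e m) := by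
      intro m; rfl
    have hF1coe : ∀ u : ↥(radSubmodule A M), ((F1 u : ↥(radSubmodule A N)) : N) = e (u : M) := by
      intro u; rfl
    have hadd : ∀ p q : SepMod A M,
        ((F0 (p + q).1, F1 (p + q).2) : SepMod A N) = (F0 p.1, F1 p.2) + (F0 q.1, F1 q.2) := by
      intro p q
      show ((F0 (p.1 + q.1), F1 (p.2 + q.2)) : SepMod A N) = _
      rw [map_add, map_add]
      rfl
    have hsmul : ∀ (z : SepAlg A S) (p : SepMod A M),
        ((F0 (z • p).1, F1 (z • p).2) : SepMod A N) = z • (F0 p.1, F1 p.2) := by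
      intro z p
      obtain ⟨q, u⟩ := p
      obtain ⟨m, rfl⟩ := Submodule.Quotient.mk_surjective _ q
      obtain ⟨x, hx⟩ := hπ z.fst.1
      obtain ⟨y, hy⟩ := hπ z.fst.2
      have hz : z = (TrivSqZeroExt.inl ((π x, π y) : S × S) : SepAlg A S)
          + TrivSqZeroExt.inr z.snd := by
        rw [hx, hy, Prod.mk.eta]
        exact (TrivSqZeroExt.inl_fst_add_inr_snd_eq z).symm
      rw [hz, add_smul, add_smul]
      have expand : ∀ (a b : SepMod A M),
          ((F0 (a + b).1, F1 (a + b).2) : SepMod A N) = (F0 a.1, F1 a.2) + (F0 b.1, F1 b.2) :=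
        hadd
      rw [expand]
      congr 1
      · rw [hM1 x y, hN1 x y]
        show ((F0 (x • Submodule.Quotient.mk m), F1 (y • u)) : SepMod A N) = _
        rw [map_smul, map_smul]
      · obtain ⟨hm1, hm2⟩ := hM2 z.snd m u
        obtain ⟨hn1, hn2⟩ := hN2 z.snd (e m) (F1 u)
        have hF0mk' : ((F0 (Submodule.Quotient.mk m), F1 u) : SepMod A N)
            = (Submodule.Quotient.mk (e m), F1 u) := by rw [hF0mk]
        rw [hF0mk']
        apply Prod.ext
        · rw [hn1, hm1, map_zero]
        · apply Subtype.ext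
          rw [hn2, hF1coe, hm2, map_smul]
    exact ⟨{ toFun := fun p => (F0 p.1, F1 p.2)
             invFun := fun p => (F0.symm p.1, F1.symm p.2)
             left_inv := by intro p; simp
             right_inv := by intro p; simp
             map_add' := fun p q => hadd p q
             map_smul' := fun z p => hsmul z p }⟩
  · -- backward direction
    rintro ⟨φ⟩
    -- ring-theoretic setup
    have hkerπ : RingHom.ker π = Ideal.jacobson (⊥ : Ideal A) := by
      ext a; rw [RingHom.mem_ker]; exact hker a
    haveI : IsArtinianRing A := IsArtinianRing.of_finite R A
    haveI : IsArtinianRing S := hπ.isArtinianRing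
    have hJS : Ideal.jacobson (⊥ : Ideal S) = ⊥ := by
      have h1 := Ideal.map_jacobson_of_surjective (I := Ideal.jacobson (⊥ : Ideal A)) hπ
        (le_of_eq hkerπ)
      have h2 : Ideal.map π (Ideal.jacobson (⊥ : Ideal A)) = ⊥ := by
        rw [eq_bot_iff, Ideal.map_le_iff_le_comap]
        intro a ha
        show π a ∈ (⊥ : Ideal S)
        rw [Ideal.mem_bot]
        exact (hker a).2 ha
      rw [Ideal.jacobson_idem, h2] at h1
      exact h1.symm
    have hssS : IsSemisimpleRing S := ss_ring_of_artinian_jacobson_bot S hJS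
    -- component facts for φ
    have hproj1 : ∀ p : SepMod A M, φ (p.1, 0) = ((φ p).1, 0) := by
      intro p
      have h1 : ((p.1, (0 : ↥(radSubmodule A M))) : SepMod A M)
          = (TrivSqZeroExt.inl ((π 1, π 0) : S × S) : SepAlg A S) • p := by
        rw [hM1 1 0 p]; simp
      rw [h1, map_smul, hN1 1 0 (φ p)]
      simp
    have hproj2 : ∀ p : SepMod A M, φ (0, p.2) = (0, (φ p).2) := by
      intro p
      have h1 : (((0 : M ⧸ radSubmodule A M), p.2) : SepMod A M)
          = (TrivSqZeroExt.inl ((π 0, π 1) : S × S) : SepAlg A S) • p := by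
        rw [hM1 0 1 p]; simp
      rw [h1, map_smul, hN1 0 1 (φ p)]
      simp
    have hproj1s : ∀ p : SepMod A N, φ.symm (p.1, 0) = ((φ.symm p).1, 0) := by
      intro p
      have h1 : ((p.1, (0 : ↥(radSubmodule A N))) : SepMod A N)
          = (TrivSqZeroExt.inl ((π 1, π 0) : S × S) : SepAlg A S) • p := by
        rw [hN1 1 0 p]; simp
      rw [h1, map_smul, hM1 1 0 (φ.symm p)]
      simp
    have hproj2s : ∀ p : SepMod A N, φ.symm (0, p.2) = (0, (φ.symm p).2) := by
      intro p
      have h1 : (((0 : N ⧸ radSubmodule A N), p.2) : SepMod A N)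
          = (TrivSqZeroExt.inl ((π 0, π 1) : S × S) : SepAlg A S) • p := by
        rw [hN1 0 1 p]; simp
      rw [h1, map_smul, hM1 0 1 (φ.symm p)]
      simp
    have hsmulA : ∀ (a : A) (p : SepMod A M),
        φ (a • p.1, a • p.2) = (a • (φ p).1, a • (φ p).2) := by
      intro a p
      have h1 : ((a • p.1, a • p.2) : SepMod A M)
          = (TrivSqZeroExt.inl ((π a, π a) : S × S) : SepAlg A S) • p := (hM1 a a p).symm
      rw [h1, map_smul, hN1 a a (φ p)]
    have hsmulAs : ∀ (a : A) (p : SepMod A N),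
        φ.symm (a • p.1, a • p.2) = (a • (φ.symm p).1, a • (φ.symm p).2) := by
      intro a p
      have h1 : ((a • p.1, a • p.2) : SepMod A N)
          = (TrivSqZeroExt.inl ((π a, π a) : S × S) : SepAlg A S) • p := (hN1 a a p).symm
      rw [h1, map_smul, hM1 a a (φ.symm p)]
    -- the two component equivalences
    set F0 : (M ⧸ radSubmodule A M) ≃ₗ[A] (N ⧸ radSubmodule A N) :=
      { toFun := fun q => (φ (q, 0)).1
        invFun := fun q => (φ.symm (q, 0)).1
        map_add' := by
          intro q q'
          show (φ (q + q', 0)).1 = (φ (q, 0)).1 + (φ (q', 0)).1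
          have h1 : ((q + q', (0 : ↥(radSubmodule A M))) : SepMod A M) = (q, 0) + (q', 0) := by
            apply Prod.ext <;> simp
          rw [h1, map_add]
          rfl
        map_smul' := by
          intro a q
          show (φ (a • q, 0)).1 = a • (φ (q, 0)).1
          have h1 : ((a • q, (0 : ↥(radSubmodule A M))) : SepMod A M) = (a • q, a • 0) := by
            rw [smul_zero]
          rw [h1, hsmulA a (q, 0)]
        left_inv := by
          intro q
          have h1 := hproj1 (q, 0)
          show (φ.symm ((φ ((q, 0) : SepMod A M)).1, 0)).1 = q
          rw [← h1, φ.symm_apply_apply]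
        right_inv := by
          intro q
          have h1 := hproj1s (q, 0)
          show (φ (((φ.symm ((q, 0) : SepMod A N)).1 : M ⧸ radSubmodule A M), 0)).1 = q
          rw [← h1, φ.apply_symm_apply] } with hF0def
    set F1 : ↥(radSubmodule A M) ≃ₗ[A] ↥(radSubmodule A N) :=
      { toFun := fun u => (φ (0, u)).2
        invFun := fun u => (φ.symm (0, u)).2
        map_add' := by
          intro u u'
          show (φ (0, u + u')).2 = (φ (0, u)).2 + (φ (0, u')).2
          have h1 : (((0 : M ⧸ radSubmodule A M), u + u') : SepMod A M) = (0, u) + (0, u') := by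
            apply Prod.ext <;> simp
          rw [h1, map_add]
          rfl
        map_smul' := by
          intro a u
          show (φ (0, a • u)).2 = a • (φ (0, u)).2
          have h1 : (((0 : M ⧸ radSubmodule A M), a • u) : SepMod A M) = (a • 0, a • u) := by
            rw [smul_zero]
          rw [h1, hsmulA a (0, u)]
        left_inv := by
          intro u
          have h1 := hproj2 (0, u)
          show (φ.symm (0, (φ ((0, u) : SepMod A M)).2)).2 = u
          rw [← h1, φ.symm_apply_apply]
        right_inv := by
          intro u
          have h1 := hproj2s (0, u)
          show (φ ((0 : M ⧸ radSubmodule A M), (φ.symm ((0, u) : SepMod A N)).2)).2 = u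
          rw [← h1, φ.apply_symm_apply] } with hF1def
    -- the compatibility
    have compat : ∀ (j : A) (hj : j ∈ Ideal.jacobson (⊥ : Ideal A)) (m : M) (n : N),
        F0 (Submodule.Quotient.mk m) = Submodule.Quotient.mk n →
        ((F1 ⟨j • m, smul_mem_rad hj m⟩ : ↥(radSubmodule A N)) : N) = j • n := by
      intro j hj m n hmn
      set jj : JacMod A := ⟨j, hj⟩ with hjj
      obtain ⟨hm1, hm2⟩ := hM2 jj m 0
      obtain ⟨hn1, hn2⟩ := hN2 jj n 0
      set w : SepMod A M :=
        (TrivSqZeroExt.inr jj : SepAlg A S) • ((Submodule.Quotient.mk m, 0) : SepMod A M)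
        with hw
      have hweq : w = ((0 : M ⧸ radSubmodule A M), w.2) := by
        apply Prod.ext
        · exact hm1
        · rfl
      have hw2 : w.2 = ⟨j • m, smul_mem_rad hj m⟩ := by
        apply Subtype.ext
        exact hm2
      have hφm : φ (Submodule.Quotient.mk m, 0)
          = ((Submodule.Quotient.mk n : N ⧸ radSubmodule A N), 0) := by
        have h1 := hproj1 ((Submodule.Quotient.mk m, (0 : ↥(radSubmodule A M))) : SepMod A M)
        have h2 : (φ ((Submodule.Quotient.mk m, 0) : SepMod A M)).1
            = (Submodule.Quotient.mk n : N ⧸ radSubmodule A N) := hmn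
        rw [← h2]
        exact h1
      have hkey := map_smul φ (TrivSqZeroExt.inr jj : SepAlg A S)
        ((Submodule.Quotient.mk m, 0) : SepMod A M)
      rw [hφm] at hkey
      have hphiw : (φ w).2 = F1 w.2 := by rw [hweq]; rfl
      calc ((F1 ⟨j • m, smul_mem_rad hj m⟩ : ↥(radSubmodule A N)) : N)
          = ((F1 w.2 : ↥(radSubmodule A N)) : N) := by rw [hw2]
        _ = (((φ w).2 : ↥(radSubmodule A N)) : N) := by rw [hphiw]
        _ = ((((TrivSqZeroExt.inr jj : SepAlg A S) •
              ((Submodule.Quotient.mk n, 0) : SepMod A N)).2 : ↥(radSubmodule A N)) : N) := by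
            rw [hkey]
        _ = j • n := hn2
    -- the complement provider
    have hcompl : ∀ (V : Type) [AddCommGroup V], ∀ [Module A V],
        (∀ j ∈ Ideal.jacobson (⊥ : Ideal A), ∀ v : V, j • v = 0) →
        ∀ D : Submodule A V, ∃ C : Submodule A V, IsCompl D C := by
      intro V _ _ h0 D
      exact exists_compl_of_jac_smul_zero π hπ hker hssS V h0 D
    exact recon hcompl F0 F1 compat
end

section
/- With A, A^s and S as above (rad²(A) = 0), a module M ∈ Mod A is indecomposable if and only if S(M) = (M/JM; JM) is indecomposable in Mod A^s. -/
lemma aux_jacobson_inf (A : Type*) [Ring A] [IsArtinianRing A] :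
    ∃ s : Finset (Ideal A), (∀ m ∈ s, m.IsMaximal) ∧
      Ideal.jacobson (⊥ : Ideal A) = s.inf id := by
  obtain ⟨I, hImem, hmin⟩ := IsArtinian.set_has_minimal
    {I : Ideal A | ∃ s : Finset (Ideal A), (∀ m ∈ s, m.IsMaximal) ∧ s.inf id = I}
    ⟨⊤, ∅, by simp, by simp⟩
  obtain ⟨s, hs, rfl⟩ := hImem
  refine ⟨s, hs, le_antisymm (Finset.le_inf fun m hm => sInf_le ⟨bot_le, hs m hm⟩) ?_⟩
  refine le_sInf fun m hm => ?_
  classical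
  have hmem : (insert m s).inf id ∈
      {I : Ideal A | ∃ s : Finset (Ideal A), (∀ m ∈ s, m.IsMaximal) ∧ s.inf id = I} :=
    ⟨insert m s, fun x hx => by
      rcases Finset.mem_insert.mp hx with rfl | hx
      · exact hm.2
      · exact hs x hx, rfl⟩
  have hle : (insert m s).inf id ≤ s.inf id := by
    rw [Finset.inf_insert]; exact inf_le_right
  have heq : (insert m s).inf id = s.inf id :=
    eq_of_le_of_not_lt hle (hmin _ hmem)
  calc s.inf id = (insert m s).inf id := heq.symm
    _ ≤ m := by rw [Finset.inf_insert]; exact inf_le_left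

lemma aux_ss_quot (A : Type*) [Ring A] [IsArtinianRing A] :
    IsSemisimpleModule A (A ⧸ Ideal.jacobson (⊥ : Ideal A)) := by
  classical
  obtain ⟨s, hmax, hJ⟩ := aux_jacobson_inf A
  let φ : A →ₗ[A] ((m : s) → A ⧸ (m : Ideal A)) :=
    LinearMap.pi fun m => Submodule.mkQ (m : Ideal A)
  have hker : LinearMap.ker φ = Ideal.jacobson (⊥ : Ideal A) := by
    rw [LinearMap.ker_pi, hJ]
    simp only [Submodule.ker_mkQ]
    rw [Finset.inf_eq_iInf]
    exact le_antisymm (le_iInf₂ fun m hm => iInf_le _ (⟨m, hm⟩ : ↥s))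
      (le_iInf fun m => iInf₂_le (m : Ideal A) m.2)
  haveI hsimple : ∀ m : s, IsSimpleModule A (A ⧸ (m : Ideal A)) := fun m =>
    isSimpleModule_iff_isCoatom.mpr (hmax m m.2).out
  haveI : IsSemisimpleModule A ((m : s) → A ⧸ (m : Ideal A)) := by
    have htop : ⨆ i : s, LinearMap.range
        (LinearMap.single A (fun m : s => A ⧸ (m : Ideal A)) i) = ⊤ :=
      LinearMap.iSup_range_single A (fun m : s => A ⧸ (m : Ideal A))
    refine isSemisimpleModule_of_isSemisimpleModule_submodule'
      (p := fun i => LinearMap.range (LinearMap.single A (fun m : s => A ⧸ (m : Ideal A)) i))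
      (fun i => ?_) htop
    haveI := hsimple i
    have hinj : Function.Injective
        (LinearMap.single A (fun m : s => A ⧸ (m : Ideal A)) i) := fun a b hab => by
      simpa [LinearMap.single_apply] using congrFun hab i
    exact IsSemisimpleModule.congr (LinearEquiv.ofInjective _ hinj).symm
  rw [← hker]
  exact IsSemisimpleModule.congr (M := ↥(LinearMap.range φ)) (LinearMap.quotKerEquivRange φ)

lemma aux_ss_killed (A : Type*) [Ring A] [IsArtinianRing A] (K : Type*) [AddCommGroup K]
    [Module A K] (hK : ∀ j ∈ Ideal.jacobson (⊥ : Ideal A), ∀ k : K, j • k = 0) :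
    IsSemisimpleModule A K := by
  haveI := aux_ss_quot A
  refine isSemisimpleModule_of_isSemisimpleModule_submodule'
    (p := fun k : K => LinearMap.range (LinearMap.toSpanSingleton A K k)) (fun k => ?_) ?_
  · have hle : Ideal.jacobson (⊥ : Ideal A) ≤
        LinearMap.ker (LinearMap.toSpanSingleton A K k) := fun j hj => by
      simp [LinearMap.mem_ker, LinearMap.toSpanSingleton_apply, hK j hj k]
    have h2 : LinearMap.range (LinearMap.toSpanSingleton A K k) = LinearMap.range
        ((Ideal.jacobson (⊥ : Ideal A)).liftQ (LinearMap.toSpanSingleton A K k) hle) :=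
      (Submodule.range_liftQ _ _ _).symm
    show IsSemisimpleModule A ↥(LinearMap.range (LinearMap.toSpanSingleton A K k))
    rw [h2]
    exact IsSemisimpleModule.range _
  · rw [eq_top_iff]
    exact fun k _ => Submodule.mem_iSup_of_mem k ⟨1, one_smul A k⟩

lemma aux_exists_compl {A M : Type*} [Ring A] [AddCommGroup M] [Module A M]
    (V Q1 Q2 : Submodule A M) (h1 : Q1 ≤ V) (h2 : Q2 ≤ V)
    (hss : IsSemisimpleModule A (↥V ⧸ (Q1.comap V.subtype))) :
    ∃ C : Submodule A M, Q1 ≤ C ∧ C ≤ V ∧ C ⊓ Q2 ≤ Q1 ∧ C ⊔ Q2 = V := by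
  set Q1' := Q1.comap V.subtype with hQ1'
  set Q2' := Q2.comap V.subtype with hQ2'
  obtain ⟨D, hD⟩ := exists_isCompl (Submodule.map Q1'.mkQ Q2')
  refine ⟨Submodule.map V.subtype (Submodule.comap Q1'.mkQ D), ?_, ?_, ?_, ?_⟩
  · intro x hx
    refine ⟨⟨x, h1 hx⟩, ?_, rfl⟩
    have : Q1'.mkQ ⟨x, h1 hx⟩ = 0 := by
      rw [Submodule.mkQ_apply, Submodule.Quotient.mk_eq_zero]
      exact hx
    simpa [this] using D.zero_mem
  · exact Submodule.map_subtype_le _ _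
  · rintro x ⟨⟨y, hy, rfl⟩, hxQ2⟩
    have hy2 : Q1'.mkQ y ∈ Submodule.map Q1'.mkQ Q2' := ⟨y, hxQ2, rfl⟩
    have : Q1'.mkQ y = 0 := by
      have := hD.disjoint.le_bot ⟨hy2, hy⟩
      simpa using this
    rw [Submodule.mkQ_apply, Submodule.Quotient.mk_eq_zero] at this
    exact this
  · refine le_antisymm (sup_le (Submodule.map_subtype_le _ _) h2) ?_
    intro v hv
    have htop : Q1'.mkQ ⟨v, hv⟩ ∈ D ⊔ Submodule.map Q1'.mkQ Q2' := by
      rw [sup_comm, codisjoint_iff.mp hD.codisjoint]; trivial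
    obtain ⟨d, hd, z, hz, hdz⟩ := Submodule.mem_sup.mp htop
    obtain ⟨q, hq, rfl⟩ := hz
    have hsub : ((⟨v, hv⟩ : V) - q) ∈ Submodule.comap Q1'.mkQ D := by
      have : Q1'.mkQ (⟨v, hv⟩ - q) = d := by rw [map_sub, ← hdz]; abel
      simpa [Submodule.mem_comap, this] using hd
    refine Submodule.mem_sup.mpr ⟨v - (q : M), ⟨_, hsub, rfl⟩, q, hq, by abel⟩

/-- A module is indecomposable iff it is nonzero and admits no nontrivial direct sum
decomposition; equivalently, iff it is nonzero and its only idempotent endomorphisms are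
`0` and the identity. -/
def IsIndecomposableModule (A : Type) [Ring A] (M : Type) [AddCommGroup M]
    [Module A M] : Prop :=
  (∃ m : M, m ≠ 0) ∧
    ∀ e : M →ₗ[A] M, e ∘ₗ e = e → e = 0 ∨ e = LinearMap.id

set_option maxHeartbeats 2000000 in
/-- With `A`, `A^s` and `S` as above (`rad²(A) = 0`), a module
`M ∈ Mod A` is indecomposable if and only if `S(M) = (M/JM; JM)` is indecomposable in
`Mod A^s`. -/
theorem separated_functor_reflects_indecomposability
    (R : Type) [CommRing R] [IsArtinianRing R]
    (A : Type) [Ring A] [Algebra R A] [Module.Finite R A]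
    (hJ2 : ∀ x ∈ Ideal.jacobson (⊥ : Ideal A), ∀ y ∈ Ideal.jacobson (⊥ : Ideal A),
      x * y = 0)
    (S : Type) [Ring S] (π : A →+* S) (hπ : Function.Surjective π)
    (hker : ∀ a : A, π a = 0 ↔ a ∈ Ideal.jacobson (⊥ : Ideal A))
    [Module (S × S) (JacMod A)] [Module (S × S)ᵐᵒᵖ (JacMod A)]
    [SMulCommClass (S × S) (S × S)ᵐᵒᵖ (JacMod A)]
    (hL : ∀ (x y : A) (m : JacMod A),
      ((((π x, π y) : S × S) • m : JacMod A) : A) = y * (m : A))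
    (hR : ∀ (x y : A) (m : JacMod A),
      (((MulOpposite.op ((π x, π y) : S × S)) • m : JacMod A) : A) = (m : A) * x)
    (M : Type) [AddCommGroup M] [Module A M]
    [Module (SepAlg A S) (SepMod A M)]
    (hM1 : ∀ (x y : A) (p : SepMod A M),
      (TrivSqZeroExt.inl ((π x, π y) : S × S) : SepAlg A S) • p = (x • p.1, y • p.2))
    (hM2 : ∀ (j : JacMod A) (m : M) (u : ↥(radSubmodule A M)),
      ((TrivSqZeroExt.inr j : SepAlg A S) •
          ((Submodule.Quotient.mk m, u) : SepMod A M)).1 = 0 ∧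
      ((((TrivSqZeroExt.inr j : SepAlg A S) •
          ((Submodule.Quotient.mk m, u) : SepMod A M)).2 : M)) = (j : A) • m) :
    IsIndecomposableModule A M ↔
      IsIndecomposableModule (SepAlg A S) (SepMod A M) := by
  classical
  haveI : IsArtinianRing A := IsArtinianRing.of_finite R A
  -- basic facts about the radical submodule
  have hmem_rad : ∀ j : JacMod A, ∀ m : M, (j : A) • m ∈ radSubmodule A M :=
    fun j m => Submodule.subset_span ⟨(j : A), j.2, m, rfl⟩
  have hkill' : ∀ x ∈ radSubmodule A M, ∀ b : A, ∀ j ∈ Ideal.jacobson (⊥ : Ideal A),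
      j • (b • x) = (0 : M) := by
    intro x hx
    induction hx using Submodule.span_induction with
    | mem x hgen =>
      obtain ⟨j', hj', m, rfl⟩ := hgen
      intro b j hj
      rw [smul_smul, smul_smul, mul_assoc,
        hJ2 j hj (b * j') (Ideal.mul_mem_left _ b hj'), zero_smul]
    | zero => intro b j hj; rw [smul_zero, smul_zero]
    | add x y _ _ hx hy => intro b j hj; rw [smul_add, smul_add, hx b j hj, hy b j hj, add_zero]
    | smul a x _ hx => intro b j hj; rw [smul_smul b a x]; exact hx (b * a) j hj
  have hkill : ∀ j ∈ Ideal.jacobson (⊥ : Ideal A), ∀ x ∈ radSubmodule A M,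
      j • x = (0 : M) := fun j hj x hx => by
    have := hkill' x hx 1 j hj; rwa [one_smul] at this
  constructor
  · -- hard direction
    intro hM
    constructor
    · obtain ⟨m, hm⟩ := hM.1
      by_cases h : m ∈ radSubmodule A M
      · refine ⟨((0 : M ⧸ radSubmodule A M), ⟨m, h⟩), fun hc => hm ?_⟩
        have := congrArg Prod.snd hc
        exact congrArg Subtype.val this
      · refine ⟨((Submodule.Quotient.mk m : M ⧸ radSubmodule A M), 0), fun hc => h ?_⟩
        have := congrArg Prod.fst hc
        rwa [← Submodule.Quotient.mk_eq_zero (radSubmodule A M)]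
    · intro E hEE
      have hEp : ∀ p, E (E p) = E p := fun p => by
        have := LinearMap.ext_iff.mp hEE p; simpa using this
      have keyq1 : ∀ q : SepMod A M,
          (TrivSqZeroExt.inl ((π 1, π 0) : S × S) : SepAlg A S) • q = (q.1, 0) := by
        intro q; rw [hM1 1 0 q]; simp
      have keyq2 : ∀ q : SepMod A M,
          (TrivSqZeroExt.inl ((π 0, π 1) : S × S) : SepAlg A S) • q = (0, q.2) := by
        intro q; rw [hM1 0 1 q]; simp
      have keyqa : ∀ (a : A) (q : SepMod A M),
          (TrivSqZeroExt.inl ((π a, π 0) : S × S) : SepAlg A S) • q = (a • q.1, 0) := by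
        intro a q; rw [hM1 a 0 q]; simp
      have keyqb : ∀ (a : A) (q : SepMod A M),
          (TrivSqZeroExt.inl ((π 0, π a) : S × S) : SepAlg A S) • q = (0, a • q.2) := by
        intro a q; rw [hM1 0 a q]; simp
      have hE1 : ∀ p1 : M ⧸ radSubmodule A M,
          E ((p1, 0) : SepMod A M) = ((E ((p1, 0) : SepMod A M)).1, 0) := by
        intro p1
        conv_lhs => rw [show ((p1, (0 : ↥(radSubmodule A M))) : SepMod A M)
          = (TrivSqZeroExt.inl ((π 1, π 0) : S × S) : SepAlg A S) •
            ((p1, 0) : SepMod A M)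
            from (keyq1 ((p1, (0 : ↥(radSubmodule A M))) : SepMod A M)).symm]
        rw [map_smul, keyq1]
      have hE2' : ∀ u : ↥(radSubmodule A M),
          E ((0, u) : SepMod A M) = (0, (E ((0, u) : SepMod A M)).2) := by
        intro u
        conv_lhs => rw [show (((0 : M ⧸ radSubmodule A M), u) : SepMod A M)
          = (TrivSqZeroExt.inl ((π 0, π 1) : S × S) : SepAlg A S) •
            ((0, u) : SepMod A M)
            from (keyq2 (((0 : M ⧸ radSubmodule A M), u) : SepMod A M)).symm]
        rw [map_smul, keyq2]
      obtain ⟨f, hfdef⟩ : ∃ f : (M ⧸ radSubmodule A M) →ₗ[A] (M ⧸ radSubmodule A M),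
          ∀ p1, f p1 = (E ((p1, 0) : SepMod A M)).1 := by
        refine ⟨?_, ?_⟩
        · exact
            { toFun := fun p1 => (E ((p1, 0) : SepMod A M)).1
              map_add' := fun a b => by
                have hab : ((a + b, (0 : ↥(radSubmodule A M))) : SepMod A M)
                    = ((a, 0) : SepMod A M) + ((b, 0) : SepMod A M) := by
                  refine Prod.ext rfl ?_; simp
                show (E ((a + b, 0) : SepMod A M)).1
                  = (E ((a, 0) : SepMod A M)).1 + (E ((b, 0) : SepMod A M)).1
                rw [hab, map_add]; rfl
              map_smul' := fun a p1 => by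
                have h1 : ((a • p1, (0 : ↥(radSubmodule A M))) : SepMod A M)
                    = (TrivSqZeroExt.inl ((π a, π 0) : S × S) : SepAlg A S) •
                      ((p1, 0) : SepMod A M) :=
                  (keyqa a ((p1, (0 : ↥(radSubmodule A M))) : SepMod A M)).symm
                show (E ((a • p1, 0) : SepMod A M)).1
                  = RingHom.id A a • (E ((p1, 0) : SepMod A M)).1
                rw [h1, map_smul, keyqa]
                rfl }
        · intro p1; rfl
      obtain ⟨g, hgdef⟩ : ∃ g : ↥(radSubmodule A M) →ₗ[A] ↥(radSubmodule A M),
          ∀ u, g u = (E ((0, u) : SepMod A M)).2 := by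
        refine ⟨?_, ?_⟩
        · exact
            { toFun := fun u => (E ((0, u) : SepMod A M)).2
              map_add' := fun a b => by
                have hab : (((0 : M ⧸ radSubmodule A M), a + b) : SepMod A M)
                    = ((0, a) : SepMod A M) + ((0, b) : SepMod A M) := by
                  refine Prod.ext ?_ rfl; simp
                show (E ((0, a + b) : SepMod A M)).2
                  = (E ((0, a) : SepMod A M)).2 + (E ((0, b) : SepMod A M)).2
                rw [hab, map_add]; rfl
              map_smul' := fun a u => by
                have h1 : (((0 : M ⧸ radSubmodule A M), a • u) : SepMod A M)
                    = (TrivSqZeroExt.inl ((π 0, π a) : S × S) : SepAlg A S) •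
                      ((0, u) : SepMod A M) :=
                  (keyqb a (((0 : M ⧸ radSubmodule A M), u) : SepMod A M)).symm
                show (E ((0, a • u) : SepMod A M)).2
                  = RingHom.id A a • (E ((0, u) : SepMod A M)).2
                rw [h1, map_smul, keyqb]
                rfl }
        · intro u; rfl
      have hEfg : ∀ p : SepMod A M, E p = (f p.1, g p.2) := by
        intro p
        have hsplit : p = ((p.1, 0) : SepMod A M) + ((0, p.2) : SepMod A M) := by
          refine Prod.ext ?_ ?_ <;> simp
        calc E p = E (((p.1, 0) : SepMod A M) + ((0, p.2) : SepMod A M)) := by rw [← hsplit]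
          _ = E ((p.1, 0) : SepMod A M) + E ((0, p.2) : SepMod A M) := map_add E _ _
          _ = ((E ((p.1, 0) : SepMod A M)).1, 0) + (0, (E ((0, p.2) : SepMod A M)).2) := by
              rw [← hE1, ← hE2']
          _ = (f p.1, g p.2) := by
              refine Prod.ext ?_ ?_
              · show (E ((p.1, 0) : SepMod A M)).1 + 0 = f p.1
                rw [add_zero, hfdef]
              · show 0 + (E ((0, p.2) : SepMod A M)).2 = g p.2
                rw [zero_add, hgdef]
      have hff : ∀ p1, f (f p1) = f p1 := by
        intro p1
        have h1 : E ((p1, 0) : SepMod A M) = ((f p1 : M ⧸ radSubmodule A M),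
            (0 : ↥(radSubmodule A M))) := by rw [hfdef]; exact hE1 p1
        have h := hEp ((p1, 0) : SepMod A M)
        rw [h1] at h
        have h5 := congrArg Prod.fst h
        rw [hfdef (f p1)]
        exact h5
      have hgg : ∀ u, g (g u) = g u := by
        intro u
        have h1 : E ((0, u) : SepMod A M) = ((0 : M ⧸ radSubmodule A M), g u) := by
          rw [hgdef]; exact hE2' u
        have h := hEp ((0, u) : SepMod A M)
        rw [h1] at h
        have h5 := congrArg Prod.snd h
        rw [hgdef (g u)]
        exact h5
      have hcompat : ∀ (j : JacMod A) (m m' : M),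
          Submodule.Quotient.mk m' = f (Submodule.Quotient.mk m) →
          ((g ⟨(j : A) • m, hmem_rad j m⟩ : ↥(radSubmodule A M)) : M) = (j : A) • m' := by
        intro j m m' hm'
        have hsm := hM2 j m 0
        have hstep : (TrivSqZeroExt.inr j : SepAlg A S) •
            ((Submodule.Quotient.mk m, 0) : SepMod A M)
            = ((0 : M ⧸ radSubmodule A M), ⟨(j : A) • m, hmem_rad j m⟩) :=
          Prod.ext hsm.1 (Subtype.ext hsm.2)
        have hE' := map_smul E (TrivSqZeroExt.inr j : SepAlg A S)
          ((Submodule.Quotient.mk m, 0) : SepMod A M)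
        rw [hstep] at hE'
        have hLL : E (((0 : M ⧸ radSubmodule A M), ⟨(j : A) • m, hmem_rad j m⟩) : SepMod A M)
            = (0, g ⟨(j : A) • m, hmem_rad j m⟩) := by rw [hgdef]; exact hE2' _
        have hR1 : E ((Submodule.Quotient.mk m, 0) : SepMod A M)
            = ((Submodule.Quotient.mk m' : M ⧸ radSubmodule A M), 0) := by
          rw [hE1]
          refine Prod.ext ?_ rfl
          rw [← hfdef]
          exact hm'.symm
        rw [hLL, hR1] at hE'
        have hsm' := hM2 j m' 0
        have hkey := congrArg Prod.snd hE'
        calc ((g ⟨(j : A) • m, hmem_rad j m⟩ : ↥(radSubmodule A M)) : M)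
            = (((TrivSqZeroExt.inr j : SepAlg A S) •
                ((Submodule.Quotient.mk m', 0) : SepMod A M)).2 : M) :=
              congrArg Subtype.val hkey
          _ = (j : A) • m' := hsm'.2
      have hfixmem : ∀ m : M,
          ((Submodule.Quotient.mk m : M ⧸ radSubmodule A M) ∈ LinearMap.range f) →
          ∀ j : JacMod A, g ⟨(j : A) • m, hmem_rad j m⟩ = ⟨(j : A) • m, hmem_rad j m⟩ := by
        intro m hmem j
        obtain ⟨y, hy⟩ := hmem
        have hfix : (Submodule.Quotient.mk m : M ⧸ radSubmodule A M)
            = f (Submodule.Quotient.mk m) := by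
          rw [← hy]
          exact (hff y).symm
        exact Subtype.ext (hcompat j m m hfix)
      have hkermem : ∀ m : M,
          ((Submodule.Quotient.mk m : M ⧸ radSubmodule A M) ∈ LinearMap.ker f) →
          ∀ j : JacMod A, g ⟨(j : A) • m, hmem_rad j m⟩ = 0 := by
        intro m hmem j
        have h0 : (Submodule.Quotient.mk (0 : M) : M ⧸ radSubmodule A M)
            = f (Submodule.Quotient.mk m) := by
          rw [LinearMap.mem_ker.mp hmem]
          exact Submodule.Quotient.mk_zero _
        have hc := hcompat j m 0 h0
        refine Subtype.ext ?_
        show ((g ⟨(j : A) • m, hmem_rad j m⟩ : ↥(radSubmodule A M)) : M)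
          = ((0 : ↥(radSubmodule A M)) : M)
        rw [hc, smul_zero]
        rfl
      let Q1 : Submodule A M := Submodule.map (radSubmodule A M).subtype (LinearMap.range g)
      let Q2 : Submodule A M := Submodule.map (radSubmodule A M).subtype (LinearMap.ker g)
      let V1 : Submodule A M := Submodule.comap (radSubmodule A M).mkQ (LinearMap.range f)
      let V2 : Submodule A M := Submodule.comap (radSubmodule A M).mkQ (LinearMap.ker f)
      have hQ1N : Q1 ≤ radSubmodule A M := Submodule.map_subtype_le _ _
      have hQ2N : Q2 ≤ radSubmodule A M := Submodule.map_subtype_le _ _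
      have hNV1 : radSubmodule A M ≤ V1 := by
        intro x hx
        show (radSubmodule A M).mkQ x ∈ LinearMap.range f
        have hz : (radSubmodule A M).mkQ x = 0 := by
          rw [Submodule.mkQ_apply, Submodule.Quotient.mk_eq_zero]; exact hx
        rw [hz]; exact Submodule.zero_mem _
      have hNV2 : radSubmodule A M ≤ V2 := by
        intro x hx
        show (radSubmodule A M).mkQ x ∈ LinearMap.ker f
        have hz : (radSubmodule A M).mkQ x = 0 := by
          rw [Submodule.mkQ_apply, Submodule.Quotient.mk_eq_zero]; exact hx
        rw [hz]; exact Submodule.zero_mem _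
      have hQsup : Q1 ⊔ Q2 = radSubmodule A M := by
        apply le_antisymm (sup_le hQ1N hQ2N)
        intro x hx
        have hker2 : g (⟨x, hx⟩ - g ⟨x, hx⟩) = 0 := by
          rw [map_sub, hgg, sub_self]
        refine Submodule.mem_sup.mpr
          ⟨((g ⟨x, hx⟩ : ↥(radSubmodule A M)) : M), ⟨g ⟨x, hx⟩, ⟨⟨x, hx⟩, rfl⟩, rfl⟩,
           (((⟨x, hx⟩ - g ⟨x, hx⟩ : ↥(radSubmodule A M))) : M),
           ⟨⟨x, hx⟩ - g ⟨x, hx⟩, LinearMap.mem_ker.mpr hker2, rfl⟩, ?_⟩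
        show ((g ⟨x, hx⟩ : ↥(radSubmodule A M)) : M)
          + (((⟨x, hx⟩ - g ⟨x, hx⟩ : ↥(radSubmodule A M))) : M) = x
        rw [Submodule.coe_sub]
        show ((g ⟨x, hx⟩ : ↥(radSubmodule A M)) : M)
          + (x - ((g ⟨x, hx⟩ : ↥(radSubmodule A M)) : M)) = x
        abel
      have hQdisj : Q1 ⊓ Q2 ≤ ⊥ := by
        intro x hx12
        obtain ⟨h1, h2⟩ := Submodule.mem_inf.mp hx12
        obtain ⟨u, hu, huv⟩ := h1
        obtain ⟨w, hw, hwv⟩ := h2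
        have huw : u = w := Subtype.ext (huv.trans hwv.symm)
        obtain ⟨v, hv⟩ := hu
        have h3 : g u = u := by rw [← hv]; exact hgg v
        have h4 : g u = 0 := by rw [huw]; exact LinearMap.mem_ker.mp hw
        have hu0 : u = 0 := by rw [← h3, h4]
        show x ∈ (⊥ : Submodule A M)
        rw [← huv, hu0]
        simp
      have hV1Q1 : ∀ x ∈ V1, ∀ j : JacMod A, (j : A) • x ∈ Q1 := by
        intro x hx j
        exact ⟨⟨(j : A) • x, hmem_rad j x⟩,
          ⟨⟨(j : A) • x, hmem_rad j x⟩, hfixmem x hx j⟩, rfl⟩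
      have hV2Q2 : ∀ x ∈ V2, ∀ j : JacMod A, (j : A) • x ∈ Q2 := by
        intro x hx j
        exact ⟨⟨(j : A) • x, hmem_rad j x⟩, LinearMap.mem_ker.mpr (hkermem x hx j), rfl⟩
      have hss : ∀ (V Q : Submodule A M), (∀ x ∈ V, ∀ j : JacMod A, (j : A) • x ∈ Q) →
          IsSemisimpleModule A (↥V ⧸ (Q.comap V.subtype)) := by
        intro V Q hVQ
        apply aux_ss_killed
        intro j hj k
        obtain ⟨v, rfl⟩ := Submodule.Quotient.mk_surjective _ k
        rw [← Submodule.Quotient.mk_smul, Submodule.Quotient.mk_eq_zero]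
        refine Submodule.mem_comap.mpr ?_
        have hsub : (V.subtype) (j • v) = j • (v : M) := rfl
        rw [hsub]
        exact hVQ (v : M) v.2 ⟨j, hj⟩
      obtain ⟨C1, hQ1C1, hC1V1, hC1Q2, hC1sup⟩ :=
        aux_exists_compl V1 Q1 Q2 (le_trans hQ1N hNV1) (le_trans hQ2N hNV1) (hss V1 Q1 hV1Q1)
      obtain ⟨C2, hQ2C2, hC2V2, hC2Q1, hC2sup⟩ :=
        aux_exists_compl V2 Q2 Q1 (le_trans hQ2N hNV2) (le_trans hQ1N hNV2) (hss V2 Q2 hV2Q2)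
      have hdisj : Disjoint C1 C2 := by
        rw [disjoint_iff_inf_le]
        intro x hx
        obtain ⟨hx1, hx2⟩ := Submodule.mem_inf.mp hx
        have hxN : x ∈ radSubmodule A M := by
          have h1 : (radSubmodule A M).mkQ x ∈ LinearMap.range f := hC1V1 hx1
          have h2 : (radSubmodule A M).mkQ x ∈ LinearMap.ker f := hC2V2 hx2
          have h3 : (radSubmodule A M).mkQ x = 0 := by
            obtain ⟨y, hy⟩ := h1
            have h4 := hff y
            rw [hy] at h4
            rw [← h4]
            exact LinearMap.mem_ker.mp h2
          rwa [Submodule.mkQ_apply, Submodule.Quotient.mk_eq_zero] at h3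
        rw [← hQsup] at hxN
        obtain ⟨a, ha, b, hb, rfl⟩ := Submodule.mem_sup.mp hxN
        have hbC1 : b ∈ C1 := by
          have hab : b = (a + b) - a := by abel
          rw [hab]
          exact Submodule.sub_mem _ hx1 (hQ1C1 ha)
        have hb0 : b = 0 := by
          have hbb := hQdisj (Submodule.mem_inf.mpr ⟨hC1Q2 (Submodule.mem_inf.mpr ⟨hbC1, hb⟩), hb⟩)
          exact (Submodule.mem_bot A).mp hbb
        have hxQ1 : a + b ∈ Q1 := by rw [hb0, add_zero]; exact ha
        have hxQ2 : a + b ∈ Q2 := hC2Q1 (Submodule.mem_inf.mpr ⟨hx2, hxQ1⟩)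
        exact hQdisj (Submodule.mem_inf.mpr ⟨hxQ1, hxQ2⟩)
      have hcodisj : Codisjoint C1 C2 := by
        rw [codisjoint_iff_le_sup]
        intro m _
        have htot : LinearMap.range f ⊔ LinearMap.ker f = ⊤ := by
          rw [eq_top_iff]
          intro p _
          refine Submodule.mem_sup.mpr ⟨f p, ⟨p, rfl⟩, p - f p,
            LinearMap.mem_ker.mpr ?_, by abel⟩
          rw [map_sub, hff, sub_self]
        have h1 : (radSubmodule A M).mkQ m ∈ LinearMap.range f ⊔ LinearMap.ker f := by
          rw [htot]; trivial
        obtain ⟨p1, hp1, p2, hp2, hsum⟩ := Submodule.mem_sup.mp h1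
        obtain ⟨m1, hm1⟩ := Submodule.Quotient.mk_surjective _ p1
        obtain ⟨m2, hm2⟩ := Submodule.Quotient.mk_surjective _ p2
        have hm1V1 : m1 ∈ V1 := by
          show (radSubmodule A M).mkQ m1 ∈ LinearMap.range f
          rw [Submodule.mkQ_apply, hm1]; exact hp1
        have hm2V2 : m2 ∈ V2 := by
          show (radSubmodule A M).mkQ m2 ∈ LinearMap.ker f
          rw [Submodule.mkQ_apply, hm2]; exact hp2
        have hrest : m - m1 - m2 ∈ radSubmodule A M := by
          rw [← Submodule.Quotient.mk_eq_zero]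
          have hmm : (Submodule.Quotient.mk (m - m1 - m2) : M ⧸ radSubmodule A M)
              = (radSubmodule A M).mkQ m - Submodule.Quotient.mk m1
                - Submodule.Quotient.mk m2 := by
            simp [Submodule.Quotient.mk_sub, Submodule.mkQ_apply]
          rw [hmm, hm1, hm2, ← hsum]
          abel
        have hsupN : radSubmodule A M ≤ C1 ⊔ C2 := by
          rw [← hQsup]
          exact sup_le (le_trans hQ1C1 le_sup_left) (le_trans hQ2C2 le_sup_right)
        have hsupV1 : V1 ≤ C1 ⊔ C2 := by
          rw [← hC1sup]
          exact sup_le le_sup_left (le_trans hQ2C2 le_sup_right)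
        have hsupV2 : V2 ≤ C1 ⊔ C2 := by
          rw [← hC2sup]
          exact sup_le le_sup_right (le_trans hQ1C1 le_sup_left)
        have hmsplit : m = (m - m1 - m2) + m1 + m2 := by abel
        rw [hmsplit]
        exact Submodule.add_mem _ (Submodule.add_mem _ (hsupN hrest) (hsupV1 hm1V1))
          (hsupV2 hm2V2)
      have hcompl : IsCompl C1 C2 := ⟨hdisj, hcodisj⟩
      let e : M →ₗ[A] M := C1.subtype ∘ₗ (C1.linearProjOfIsCompl C2 hcompl)
      have heC1 : ∀ x ∈ C1, e x = x := by
        intro x hx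
        have hp := Submodule.linearProjOfIsCompl_apply_left hcompl ⟨x, hx⟩
        exact congrArg C1.subtype hp
      have heC2 : ∀ x ∈ C2, e x = 0 := by
        intro x hx
        have hp := Submodule.linearProjOfIsCompl_apply_right hcompl ⟨x, hx⟩
        have h2 := congrArg C1.subtype hp
        exact h2.trans (map_zero _)
      have hee : e ∘ₗ e = e := by
        apply LinearMap.ext
        intro x
        show e (e x) = e x
        apply heC1
        exact ((C1.linearProjOfIsCompl C2 hcompl) x).2
      rcases hM.2 e hee with h0 | h1
      · left
        have hC1bot : C1 = ⊥ := by
          rw [eq_bot_iff]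
          intro x hx
          have h2 := heC1 x hx
          rw [h0] at h2
          have hx0 : x = 0 := by simpa using h2.symm
          rw [hx0]; exact Submodule.zero_mem _
        have hQ1bot : Q1 ≤ ⊥ := le_trans hQ1C1 (le_of_eq hC1bot)
        have hV1N : V1 ≤ radSubmodule A M := by
          rw [← hC1sup, hC1bot]
          exact sup_le bot_le hQ2N
        have hg0 : ∀ u, g u = 0 := by
          intro u
          have hmem : ((g u : ↥(radSubmodule A M)) : M) ∈ Q1 := ⟨g u, ⟨u, rfl⟩, rfl⟩
          have h2 := hQ1bot hmem
          exact Subtype.ext (by simpa using h2)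
        have hf0 : ∀ p1, f p1 = 0 := by
          intro p1
          obtain ⟨m', hm'⟩ := Submodule.Quotient.mk_surjective _ (f p1)
          have hm'V1 : m' ∈ V1 := by
            show (radSubmodule A M).mkQ m' ∈ LinearMap.range f
            rw [Submodule.mkQ_apply, hm']
            exact ⟨p1, rfl⟩
          rw [← hm']
          exact (Submodule.Quotient.mk_eq_zero _).mpr (hV1N hm'V1)
        apply LinearMap.ext
        intro p
        rw [hEfg p, hf0, hg0]
        rfl
      · right
        have hC2bot : C2 = ⊥ := by
          rw [eq_bot_iff]
          intro x hx
          have h2 := heC2 x hx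
          rw [h1] at h2
          have hx0 : x = 0 := by simpa using h2
          rw [hx0]; exact Submodule.zero_mem _
        have hQ2bot : Q2 ≤ ⊥ := le_trans hQ2C2 (le_of_eq hC2bot)
        have hV2N : V2 ≤ radSubmodule A M := by
          rw [← hC2sup, hC2bot]
          exact sup_le bot_le hQ1N
        have hgid : ∀ u, g u = u := by
          intro u
          have hker2 : g (g u - u) = 0 := by rw [map_sub, hgg, sub_self]
          have hmemQ2 : ((g u - u : ↥(radSubmodule A M)) : M) ∈ Q2 :=
            ⟨g u - u, LinearMap.mem_ker.mpr hker2, rfl⟩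
          have h2 := hQ2bot hmemQ2
          have h3 : g u - u = 0 := Subtype.ext (by simpa using h2)
          exact sub_eq_zero.mp h3
        have hfid : ∀ p1, f p1 = p1 := by
          intro p1
          have hker2 : f (f p1 - p1) = 0 := by rw [map_sub, hff, sub_self]
          obtain ⟨m', hm'⟩ := Submodule.Quotient.mk_surjective _ (f p1 - p1)
          have hm'V2 : m' ∈ V2 := by
            show (radSubmodule A M).mkQ m' ∈ LinearMap.ker f
            rw [Submodule.mkQ_apply, hm']
            exact LinearMap.mem_ker.mpr hker2
          have hz : f p1 - p1 = 0 := by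
            rw [← hm']
            exact (Submodule.Quotient.mk_eq_zero _).mpr (hV2N hm'V2)
          exact sub_eq_zero.mp hz
        apply LinearMap.ext
        intro p
        rw [hEfg p, hfid, hgid]
        rfl
  · -- easy direction
    intro hS
    constructor
    · obtain ⟨p, hp⟩ := hS.1
      by_contra h
      push_neg at h
      apply hp
      obtain ⟨m, hm⟩ := Submodule.Quotient.mk_surjective _ p.1
      have h1 : p.1 = 0 := by rw [← hm, h m]; simp
      have h2 : p.2 = 0 := Subtype.ext (h _)
      exact Prod.ext h1 h2
    · intro e he
      have hee : ∀ m : M, e (e m) = e m := fun m => by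
        have := LinearMap.ext_iff.mp he m; simpa using this
      have heN : ∀ x ∈ radSubmodule A M, e x ∈ radSubmodule A M := by
        intro x hx
        induction hx using Submodule.span_induction with
        | mem x hgen =>
          obtain ⟨j, hj, m, rfl⟩ := hgen
          rw [map_smul]; exact hmem_rad ⟨j, hj⟩ (e m)
        | zero => rw [map_zero]; exact Submodule.zero_mem _
        | add x y _ _ hx hy => rw [map_add]; exact Submodule.add_mem _ hx hy
        | smul a x _ hx => rw [map_smul]; exact Submodule.smul_mem _ a hx
      let f' : (M ⧸ radSubmodule A M) →ₗ[A] (M ⧸ radSubmodule A M) :=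
        Submodule.mapQ _ _ e (fun x hx => heN x hx)
      let g' : ↥(radSubmodule A M) →ₗ[A] ↥(radSubmodule A M) := e.restrict heN
      have hf'mk : ∀ m : M, f' (Submodule.Quotient.mk m) = Submodule.Quotient.mk (e m) :=
        fun m => Submodule.mapQ_apply _ _ _ m
      have hg'val : ∀ u : ↥(radSubmodule A M), ((g' u : M)) = e u := fun u => rfl
      let E : SepMod A M →ₗ[SepAlg A S] SepMod A M :=
        { toFun := fun p => (f' p.1, g' p.2)
          map_add' := fun q r => by
            refine Prod.ext ?_ ?_ <;> simp
          map_smul' := by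
            intro z p
            obtain ⟨p1, p2⟩ := p
            obtain ⟨m, rfl⟩ := Submodule.Quotient.mk_surjective _ p1
            show (fun p : SepMod A M => ((f' p.1, g' p.2) : SepMod A M))
                (z • (Submodule.Quotient.mk m, p2))
              = z • ((fun p : SepMod A M => ((f' p.1, g' p.2) : SepMod A M))
                (Submodule.Quotient.mk m, p2))
            have hz : z = TrivSqZeroExt.inl z.fst + TrivSqZeroExt.inr z.snd :=
              (TrivSqZeroExt.inl_fst_add_inr_snd_eq z).symm
            rw [hz, add_smul, add_smul]
            have hadd : ∀ q r : SepMod A M,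
                (fun p : SepMod A M => ((f' p.1, g' p.2) : SepMod A M)) (q + r)
                  = (fun p : SepMod A M => ((f' p.1, g' p.2) : SepMod A M)) q
                    + (fun p : SepMod A M => ((f' p.1, g' p.2) : SepMod A M)) r := by
              intro q r; refine Prod.ext ?_ ?_ <;> simp
            rw [hadd]
            congr 1
            · -- inl part
              obtain ⟨x, hx⟩ := hπ z.fst.1
              obtain ⟨y, hy⟩ := hπ z.fst.2
              have hzfst : z.fst = ((π x, π y) : S × S) := by
                rw [hx, hy]
              rw [hzfst, hM1 x y, hM1 x y]
              refine Prod.ext ?_ ?_ <;> simp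
            · -- inr part
              have h2 := hM2 z.snd m p2
              have hstep : (TrivSqZeroExt.inr z.snd : SepAlg A S) •
                  ((Submodule.Quotient.mk m, p2) : SepMod A M)
                  = (0, ⟨(z.snd : A) • m, hmem_rad z.snd m⟩) :=
                Prod.ext h2.1 (Subtype.ext h2.2)
              rw [hstep]
              have h3 := hM2 z.snd (e m) (g' p2)
              have hstep2 : (TrivSqZeroExt.inr z.snd : SepAlg A S) •
                  ((Submodule.Quotient.mk (e m), g' p2) : SepMod A M)
                  = (0, ⟨(z.snd : A) • (e m), hmem_rad z.snd (e m)⟩) :=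
                Prod.ext h3.1 (Subtype.ext h3.2)
              have hfm : f' (Submodule.Quotient.mk m) = Submodule.Quotient.mk (e m) := hf'mk m
              show ((f' (0 : M ⧸ radSubmodule A M), g' ⟨(z.snd : A) • m, _⟩) : SepMod A M)
                = (TrivSqZeroExt.inr z.snd : SepAlg A S) •
                    ((f' (Submodule.Quotient.mk m), g' p2) : SepMod A M)
              rw [hfm, hstep2]
              refine Prod.ext (by simp) (Subtype.ext ?_)
              show (e ((z.snd : A) • m) : M) = (z.snd : A) • (e m)
              rw [map_smul] }
      have hEfun : ∀ p : SepMod A M, E p = (f' p.1, g' p.2) := fun p => rfl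
      have hEEE : E ∘ₗ E = E := by
        apply LinearMap.ext
        intro p
        obtain ⟨p1, p2⟩ := p
        obtain ⟨m, rfl⟩ := Submodule.Quotient.mk_surjective _ p1
        show E (E (Submodule.Quotient.mk m, p2)) = E (Submodule.Quotient.mk m, p2)
        simp only [hEfun]
        refine Prod.ext ?_ (Subtype.ext ?_)
        · show f' (f' (Submodule.Quotient.mk m)) = f' (Submodule.Quotient.mk m)
          simp only [hf'mk, hee]
        · show (e (e (p2 : M)) : M) = e (p2 : M)
          rw [hee]
      rcases hS.2 E hEEE with h0 | h1
      · left
        have he0 : ∀ m : M, e m ∈ radSubmodule A M := by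
          intro m
          have := congrArg Prod.fst (LinearMap.ext_iff.mp h0
            ((Submodule.Quotient.mk m : M ⧸ radSubmodule A M), 0))
          rw [hEfun] at this
          have h2 : f' (Submodule.Quotient.mk m) = 0 := this
          rw [hf'mk, Submodule.Quotient.mk_eq_zero] at h2
          exact h2
        have heN0 : ∀ x ∈ radSubmodule A M, e x = 0 := by
          intro x hx
          have := congrArg Prod.snd (LinearMap.ext_iff.mp h0
            ((0 : M ⧸ radSubmodule A M), ⟨x, hx⟩))
          rw [hEfun] at this
          have h2 : g' ⟨x, hx⟩ = 0 := this
          exact congrArg Subtype.val h2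
        apply LinearMap.ext
        intro m
        show e m = 0
        rw [← hee m, heN0 _ (he0 m)]
      · right
        have hmk : ∀ m : M, (Submodule.Quotient.mk (e m) : M ⧸ radSubmodule A M)
            = Submodule.Quotient.mk m := by
          intro m
          have := congrArg Prod.fst (LinearMap.ext_iff.mp h1
            ((Submodule.Quotient.mk m : M ⧸ radSubmodule A M), 0))
          rw [hEfun] at this
          have h2 : f' (Submodule.Quotient.mk m) = Submodule.Quotient.mk m := this
          rw [hf'mk] at h2
          exact h2
        have hfix : ∀ x, ∀ hx : x ∈ radSubmodule A M, e x = x := by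
          intro x hx
          have := congrArg Prod.snd (LinearMap.ext_iff.mp h1
            ((0 : M ⧸ radSubmodule A M), ⟨x, hx⟩))
          rw [hEfun] at this
          have h2 : g' ⟨x, hx⟩ = ⟨x, hx⟩ := this
          exact congrArg Subtype.val h2
        apply LinearMap.ext
        intro m
        show e m = m
        have hmemN : m - e m ∈ radSubmodule A M := by
          rw [← Submodule.Quotient.mk_eq_zero (radSubmodule A M)]
          have : (Submodule.Quotient.mk (m - e m) : M ⧸ radSubmodule A M)
              = Submodule.Quotient.mk m - Submodule.Quotient.mk (e m) :=
            Submodule.Quotient.mk_sub _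
          rw [this, hmk, sub_self]
        have h2 : e (m - e m) = m - e m := hfix _ hmemN
        have h3 : e (m - e m) = 0 := by rw [map_sub, hee, sub_self]
        have := h2.symm.trans h3
        exact (sub_eq_zero.mp this).symm
end
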